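/- arXiv:1311.0335 — 7 statements merged into one kernel-verified Lean document; each statement's English description precedes it below -/
import Mathlib

section
/- Fix a base b ≥ 2, an integer k ≥ 1, and a digit d ∈ {0,…,b−1}; let p_b(k,i) be the number of blocks of length k in base b in which the digit d occurs exactly i times. Then for every real ε with 6/k ≤ ε ≤ 1/b, both Σ_{i : 0 ≤ i ≤ k/b − εk} p_b(k,i) ≤ b^k · e^{−bε²k/6} and Σ_{i : k/b + εk ≤ i ≤ k} p_b(k,i) ≤ b^k · e^{−bε²k/6}. -/
/-- `numBlocks b k d i` is the number of blocks of length `k` in base `b` (i.e. elements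
of `{0, …, b−1}^k`) in which the digit `d` occurs exactly `i` times. -/
def numBlocks (b k d i : ℕ) : ℕ :=
  ((Finset.univ : Finset (Fin k → Fin b)).filter fun x =>
    (Finset.univ.filter fun j => (x j : ℕ) = d).card = i).card

lemma L1 : ∀ x ∈ Set.Icc (0:ℝ) 1, x + x^2/6 ≤ (1+x) * Real.log (1+x) := by
  set f : ℝ → ℝ := fun x => (1+x) * Real.log (1+x) - x - x^2/6 with hf
  have hderiv : ∀ y ∈ Set.Ioo (0:ℝ) 1,
      HasDerivAt f (Real.log (1+y) + 1 - 1 - 2*y/6) y := by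
    intro y hy
    have h1 : (1:ℝ) + y ≠ 0 := by nlinarith [hy.1]
    have h2 : HasDerivAt (fun x : ℝ => (1+x) * Real.log (1+x))
        (Real.log (1+y) + 1) y := by
      have := (Real.hasDerivAt_mul_log h1).comp y
        ((hasDerivAt_id y).const_add 1)
      simpa [Function.comp_def] using this
    have h3 : HasDerivAt f (Real.log (1+y) + 1 - 1 - ((2:ℕ):ℝ) * y ^ (2 - 1) / 6) y :=
      (h2.sub (hasDerivAt_id y)).sub ((hasDerivAt_pow 2 y).div_const 6)
    convert h3 using 1
    push_cast
    ring
  have hmono : MonotoneOn f (Set.Icc (0:ℝ) 1) := by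
    apply monotoneOn_of_deriv_nonneg (convex_Icc _ _)
    · apply ContinuousOn.sub (ContinuousOn.sub ?_ (by fun_prop)) (by fun_prop)
      apply ContinuousOn.mul (by fun_prop)
      apply ContinuousOn.log (by fun_prop)
      intro y hy
      simp only [Set.mem_Icc] at hy
      nlinarith [hy.1]
    · intro y hy
      rw [interior_Icc] at hy
      exact ((hderiv y hy).differentiableAt).differentiableWithinAt
    · intro y hy
      rw [interior_Icc] at hy
      rw [(hderiv y hy).deriv]
      have h1 : (0:ℝ) < 1 + y := by nlinarith [hy.1]
      have hlog : 1 - (1+y)⁻¹ ≤ Real.log (1+y) :=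
        Real.one_sub_inv_le_log_of_pos h1
      have hc : (1+y)⁻¹ * (1+y) = 1 := inv_mul_cancel₀ h1.ne'
      have hlog' : y ≤ (1+y) * Real.log (1+y) := by
        nlinarith [mul_le_mul_of_nonneg_right hlog h1.le]
      have hlog0 : 0 ≤ Real.log (1+y) := Real.log_nonneg (by linarith [hy.1])
      nlinarith [hlog', hlog0, hy.1, hy.2,
        mul_nonneg hlog0 (by linarith [hy.2] : (0:ℝ) ≤ 2 - y)]
  intro x hx
  have h0 : f 0 ≤ f x := hmono (Set.left_mem_Icc.mpr zero_le_one) hx hx.1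
  have hz : f 0 = 0 := by simp [hf]
  rw [hz] at h0
  simp only [hf] at h0
  linarith

lemma L2 : ∀ x ∈ Set.Icc (0:ℝ) 1, x^2/6 ≤ (1-x) * Real.log (1-x) + x := by
  set f : ℝ → ℝ := fun x => (1-x) * Real.log (1-x) + x - x^2/6 with hf
  have hderiv : ∀ y ∈ Set.Ioo (0:ℝ) 1,
      HasDerivAt f (-(Real.log (1-y) + 1) + 1 - 2*y/6) y := by
    intro y hy
    have h1 : (1:ℝ) - y ≠ 0 := by nlinarith [hy.2]
    have h2 : HasDerivAt (fun x : ℝ => (1-x) * Real.log (1-x))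
        (-(Real.log (1-y) + 1)) y := by
      have := (Real.hasDerivAt_mul_log h1).comp y
        ((hasDerivAt_id y).const_sub 1)
      simpa [Function.comp_def] using this
    have h3 : HasDerivAt f (-(Real.log (1-y) + 1) + 1 - ((2:ℕ):ℝ) * y ^ (2 - 1) / 6) y :=
      (h2.add (hasDerivAt_id y)).sub ((hasDerivAt_pow 2 y).div_const 6)
    convert h3 using 1
    push_cast
    ring
  have hmono : MonotoneOn f (Set.Icc (0:ℝ) 1) := by
    apply monotoneOn_of_deriv_nonneg (convex_Icc _ _)
    · apply ContinuousOn.sub (ContinuousOn.add ?_ (by fun_prop)) (by fun_prop)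
      have hc : Continuous fun x : ℝ => (1-x) * Real.log (1-x) := by
        have := Real.continuous_mul_log.comp
          (show Continuous fun x : ℝ => 1 - x by fun_prop)
        simpa [Function.comp_def] using this
      exact hc.continuousOn
    · intro y hy
      rw [interior_Icc] at hy
      exact ((hderiv y hy).differentiableAt).differentiableWithinAt
    · intro y hy
      rw [interior_Icc] at hy
      rw [(hderiv y hy).deriv]
      have h1 : (0:ℝ) < 1 - y := by nlinarith [hy.2]
      have hlog : Real.log (1-y) ≤ (1-y) - 1 := Real.log_le_sub_one_of_pos h1
      nlinarith [hy.1, hy.2]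
  intro x hx
  have h0 : f 0 ≤ f x := hmono (Set.left_mem_Icc.mpr zero_le_one) hx hx.1
  have hz : f 0 = 0 := by simp [hf]
  rw [hz] at h0
  simp only [hf] at h0
  linarith

lemma key_identity (b k d : ℕ) (hb : 1 ≤ b) (hd : d < b) (w : ℝ) :
    ∑ i ∈ Finset.range (k + 1), (numBlocks b k d i : ℝ) * w ^ i
      = (w + (b : ℝ) - 1) ^ k := by
  classical
  have hsum : (∑ v : Fin b, if (v : ℕ) = d then w else 1) = w + (b:ℝ) - 1 := by
    rw [Finset.sum_ite, Finset.sum_const, Finset.sum_const]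
    have hfil : Finset.univ.filter (fun v : Fin b => (v:ℕ) = d) = {⟨d, hd⟩} := by
      ext v
      simp [Fin.ext_iff]
    have := Finset.card_filter_add_card_filter_not
      (s := (Finset.univ : Finset (Fin b))) (p := fun v : Fin b => (v:ℕ) = d)
    rw [hfil] at this ⊢
    simp only [Finset.card_singleton, Finset.card_univ, Fintype.card_fin] at this
    have hcard : (Finset.univ.filter (fun v : Fin b => ¬ (v:ℕ) = d)).card = b - 1 := by
      omega
    rw [hcard]
    simp only [Finset.card_singleton, smul_eq_mul, one_mul, nsmul_eq_mul, mul_one]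
    have : ((b - 1 : ℕ) : ℝ) = (b : ℝ) - 1 := by
      push_cast [hb]
      ring
    rw [this]
    ring
  have hrhs : (w + (b : ℝ) - 1) ^ k
      = ∑ x : Fin k → Fin b, ∏ j, (if (x j : ℕ) = d then w else 1) := by
    have hpow : (w + (b : ℝ) - 1) ^ k
        = ∏ _j : Fin k, (∑ v : Fin b, if (v : ℕ) = d then w else 1) := by
      simp [Finset.prod_const, hsum]
    rw [hpow]
    rw [Finset.prod_univ_sum (fun _ : Fin k => (Finset.univ : Finset (Fin b)))
      (fun _ v => if (v : ℕ) = d then w else 1)]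
    rw [Fintype.piFinset_univ]
  have hprod : ∀ x : Fin k → Fin b,
      (∏ j, if (x j : ℕ) = d then w else 1)
        = w ^ ((Finset.univ.filter fun j => (x j : ℕ) = d).card) := by
    intro x
    rw [Finset.prod_ite, Finset.prod_const, Finset.prod_const, one_pow, mul_one]
  rw [hrhs]
  rw [Finset.sum_congr rfl (fun x _ => hprod x)]
  rw [← Finset.sum_fiberwise_of_maps_to
    (g := fun x : Fin k → Fin b => (Finset.univ.filter fun j => (x j : ℕ) = d).card)
    (t := Finset.range (k + 1))
    (fun x _ => Finset.mem_range.mpr (Nat.lt_succ_of_le (by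
      simpa using Finset.card_filter_le Finset.univ (fun j => (x j : ℕ) = d))))]
  apply Finset.sum_congr rfl
  intro i _
  rw [numBlocks]
  rw [Finset.sum_congr rfl (fun x hx => by
    rw [(Finset.mem_filter.mp hx).2])]
  rw [Finset.sum_const, nsmul_eq_mul]

lemma sum_filter_le (b k d : ℕ) (hb : 1 ≤ b) (hd : d < b) (w a : ℝ) (hw : 0 ≤ w)
    (P : ℕ → Prop) [DecidablePred P]
    (hP : ∀ i ∈ Finset.range (k+1), P i → w ^ a ≤ w ^ (i:ℝ)) :
    ((∑ i ∈ (Finset.range (k+1)).filter P, numBlocks b k d i : ℕ) : ℝ) * w ^ a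
      ≤ (w + (b:ℝ) - 1) ^ k := by
  rw [← key_identity b k d hb hd w]
  push_cast
  rw [Finset.sum_mul]
  refine le_trans (Finset.sum_le_sum ?_)
    (Finset.sum_le_sum_of_subset_of_nonneg (Finset.filter_subset _ _) ?_)
  · intro i hi
    obtain ⟨hir, hiP⟩ := Finset.mem_filter.mp hi
    have h := hP i hir hiP
    have hnat : w ^ (i:ℝ) = w ^ i := Real.rpow_natCast w i
    calc (numBlocks b k d i : ℝ) * w ^ a
        ≤ (numBlocks b k d i : ℝ) * w ^ (i:ℝ) :=
          mul_le_mul_of_nonneg_left h (by positivity)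
      _ = (numBlocks b k d i : ℝ) * w ^ i := by rw [hnat]
  · intro i _ _
    positivity

lemma main_aux (b k d : ℕ) (hb : 2 ≤ b) (hd : d < b)
    (w a E : ℝ) (hw : 0 ≤ w) (hw1 : 0 < w + (b:ℝ) - 1)
    (P : ℕ → Prop) [DecidablePred P]
    (hP : ∀ i ∈ Finset.range (k+1), P i → w ^ a ≤ w ^ (i:ℝ))
    (hwa : 0 < w ^ a)
    (hexp : w ^ a = Real.exp (a * Real.log w))
    (hlog : k * Real.log (w + (b:ℝ) - 1) - a * Real.log w ≤ k * Real.log b + E) :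
    ((∑ i ∈ (Finset.range (k+1)).filter P, numBlocks b k d i : ℕ) : ℝ)
      ≤ (b:ℝ)^k * Real.exp E := by
  have hb0 : (0:ℝ) < b := by exact_mod_cast Nat.lt_of_lt_of_le Nat.zero_lt_two hb
  have h1 := sum_filter_le b k d (le_trans one_le_two hb) hd w a hw P hP
  have h2 : (w + (b:ℝ) - 1)^k = Real.exp (k * Real.log (w + (b:ℝ) - 1)) := by
    rw [Real.exp_nat_mul, Real.exp_log hw1]
  have h3 : ((b:ℝ))^k * Real.exp E = Real.exp (k * Real.log b + E) := by
    rw [Real.exp_add, Real.exp_nat_mul, Real.exp_log hb0]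
  rw [h3]
  set S : ℝ := ((∑ i ∈ (Finset.range (k+1)).filter P, numBlocks b k d i : ℕ) : ℝ)
  calc S = S * w ^ a / w ^ a := by field_simp
    _ ≤ (w + (b:ℝ) - 1)^k / w ^ a := (div_le_div_iff_of_pos_right hwa).mpr h1
    _ = Real.exp (k * Real.log (w + (b:ℝ) - 1) - a * Real.log w) := by
        rw [h2, hexp, ← Real.exp_sub]
    _ ≤ _ := Real.exp_le_exp.mpr hlog

/-- For a base `b ≥ 2`, length `k ≥ 1`, digit `d < b`, and any real `ε` with
`6/k ≤ ε ≤ 1/b`, the number of blocks of length `k` in base `b` in which `d` occurs at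
most `k/b − εk` times, as well as the number of those in which `d` occurs at least
`k/b + εk` times, is at most `b^k · e^{−bε²k/6}`. -/
theorem numBlocks_tail_bounds
    (b k d : ℕ) (hb : 2 ≤ b) (hk : 1 ≤ k) (hd : d < b)
    (ε : ℝ) (hε₁ : 6 / (k : ℝ) ≤ ε) (hε₂ : ε ≤ 1 / (b : ℝ)) :
    ((∑ i ∈ (Finset.range (k + 1)).filter (fun i : ℕ => (i : ℝ) ≤ (k : ℝ) / b - ε * k),
        numBlocks b k d i : ℕ) : ℝ) ≤ (b : ℝ) ^ k * Real.exp (-((b : ℝ) * ε ^ 2 * k) / 6) ∧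
    ((∑ i ∈ (Finset.range (k + 1)).filter (fun i : ℕ => (k : ℝ) / b + ε * k ≤ (i : ℝ)),
        numBlocks b k d i : ℕ) : ℝ) ≤ (b : ℝ) ^ k * Real.exp (-((b : ℝ) * ε ^ 2 * k) / 6) := by
  have hb0 : (0:ℝ) < b := by exact_mod_cast Nat.lt_of_lt_of_le Nat.zero_lt_two hb
  have hb0' : (b:ℝ) ≠ 0 := ne_of_gt hb0
  have hk0 : (0:ℝ) < k := by exact_mod_cast hk
  have hε0 : 0 < ε := lt_of_lt_of_le (by positivity) hε₁
  set δ : ℝ := (b:ℝ) * ε with hδ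
  have hδ0 : 0 < δ := by positivity
  have hδ1 : δ ≤ 1 := by
    rw [hδ]
    calc (b:ℝ) * ε ≤ (b:ℝ) * (1 / b) := mul_le_mul_of_nonneg_left hε₂ hb0.le
      _ = 1 := by field_simp
  have hb2 : (2:ℝ) ≤ b := by exact_mod_cast hb
  have hE : -((b : ℝ) * ε ^ 2 * k) / 6 = -((b : ℝ) * ε ^ 2 * k) / 6 := rfl
  constructor
  · -- lower tail : w = 1 - δ, a = k/b - εk
    set w : ℝ := 1 - δ with hw
    set a : ℝ := (k:ℝ)/b - ε*k with ha
    have hw0 : 0 ≤ w := by rw [hw]; linarith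
    have hwle1 : w ≤ 1 := by rw [hw]; linarith
    have hweq : w = 0 → a = 0 := by
      intro h0
      have hδe : δ = 1 := by rw [hw] at h0; linarith
      have hεe : ε = 1/b := by
        rw [hδ] at hδe
        field_simp at hδe ⊢
        linarith
      rw [ha, hεe]
      field_simp
      ring
    have hw1 : 0 < w + (b:ℝ) - 1 := by rw [hw]; linarith
    apply main_aux b k d hb hd w a _ hw0 hw1
    · -- hP
      intro i _ hPi
      rcases eq_or_lt_of_le hw0 with h0 | h0
      · have ha0 : a = 0 := hweq h0.symm
        have hi0 : (i:ℝ) ≤ 0 := by rw [← ha0]; exact hPi.trans_eq (by rw [ha])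
        have : i = 0 := by exact_mod_cast le_antisymm (by exact_mod_cast hi0) (Nat.zero_le i)
        rw [this, ha0]
        simp
      · exact Real.rpow_le_rpow_of_exponent_ge h0 hwle1 hPi
    · -- 0 < w ^ a
      rcases eq_or_lt_of_le hw0 with h0 | h0
      · rw [← h0, hweq h0.symm, Real.rpow_zero]; norm_num
      · exact Real.rpow_pos_of_pos h0 a
    · -- hexp
      rcases eq_or_lt_of_le hw0 with h0 | h0
      · rw [← h0, hweq h0.symm, Real.rpow_zero, zero_mul, Real.exp_zero]
      · rw [Real.rpow_def_of_pos h0, mul_comm]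
    · -- hlog
      have hwb : w + (b:ℝ) - 1 = (b:ℝ) - δ := by rw [hw]; ring
      have hbd0 : (0:ℝ) < (b:ℝ) - δ := by linarith
      have l2 : Real.log ((b:ℝ) - δ) ≤ Real.log b - δ/b := by
        have hsplit : (b:ℝ) - δ = b * (1 - δ/b) := by field_simp
        have hfac : (0:ℝ) < 1 - δ/b := by
          rw [show (1:ℝ) - δ/b = ((b:ℝ) - δ)/b by field_simp]
          positivity
        rw [hsplit, Real.log_mul hb0' (ne_of_gt hfac)]
        have := Real.log_le_sub_one_of_pos hfac
        linarith
      have lL2 := L2 δ ⟨hδ0.le, hδ1⟩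
      have scalar : (b:ℝ) * Real.log ((b:ℝ) - δ) - (1 - δ) * Real.log (1 - δ)
          ≤ (b:ℝ) * Real.log b - δ^2/6 := by
        have h := mul_le_mul_of_nonneg_left l2 hb0.le
        rw [mul_sub] at h
        have hbδ : (b:ℝ) * (δ/b) = δ := by field_simp
        rw [hbδ] at h
        linarith
      rw [hwb]
      rw [show Real.log w = Real.log (1 - δ) from by rw [hw]]
      have e1 : (b:ℝ) * ((k:ℝ) * Real.log ((b:ℝ) - δ) - a * Real.log (1 - δ))
          = (k:ℝ) * ((b:ℝ) * Real.log ((b:ℝ) - δ) - (1 - δ) * Real.log (1 - δ)) := by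
        rw [ha, hδ]
        field_simp
      have e2 : (b:ℝ) * ((k:ℝ) * Real.log b + -((b : ℝ) * ε ^ 2 * k) / 6)
          = (k:ℝ) * ((b:ℝ) * Real.log b - δ^2/6) := by
        rw [hδ]
        field_simp
        ring
      have := mul_le_mul_of_nonneg_left scalar hk0.le
      have hmul : (b:ℝ) * ((k:ℝ) * Real.log ((b:ℝ) - δ) - a * Real.log (1 - δ))
          ≤ (b:ℝ) * ((k:ℝ) * Real.log b + -((b : ℝ) * ε ^ 2 * k) / 6) := by
        rw [e1, e2]; exact this
      exact le_of_mul_le_mul_left hmul hb0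
  · -- upper tail : w = 1 + δ, a = k/b + εk
    set w : ℝ := 1 + δ with hw
    set a : ℝ := (k:ℝ)/b + ε*k with ha
    have hw0 : (0:ℝ) < w := by rw [hw]; linarith
    have hwge1 : 1 ≤ w := by rw [hw]; linarith
    have hw1 : 0 < w + (b:ℝ) - 1 := by rw [hw]; linarith
    apply main_aux b k d hb hd w a _ hw0.le hw1
    · intro i _ hPi
      exact Real.rpow_le_rpow_of_exponent_le hwge1 hPi
    · exact Real.rpow_pos_of_pos hw0 a
    · rw [Real.rpow_def_of_pos hw0, mul_comm]
    · have hwb : w + (b:ℝ) - 1 = (b:ℝ) + δ := by rw [hw]; ring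
      have l2 : Real.log ((b:ℝ) + δ) ≤ Real.log b + δ/b := by
        have hsplit : (b:ℝ) + δ = b * (1 + δ/b) := by field_simp
        have hfac : (0:ℝ) < 1 + δ/b := by positivity
        rw [hsplit, Real.log_mul hb0' (ne_of_gt hfac)]
        have := Real.log_le_sub_one_of_pos hfac
        linarith
      have lL1 := L1 δ ⟨hδ0.le, hδ1⟩
      have scalar : (b:ℝ) * Real.log ((b:ℝ) + δ) - (1 + δ) * Real.log (1 + δ)
          ≤ (b:ℝ) * Real.log b - δ^2/6 := by
        have h := mul_le_mul_of_nonneg_left l2 hb0.le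
        rw [mul_add] at h
        have hbδ : (b:ℝ) * (δ/b) = δ := by field_simp
        rw [hbδ] at h
        linarith
      rw [hwb]
      rw [show Real.log w = Real.log (1 + δ) from by rw [hw]]
      have e1 : (b:ℝ) * ((k:ℝ) * Real.log ((b:ℝ) + δ) - a * Real.log (1 + δ))
          = (k:ℝ) * ((b:ℝ) * Real.log ((b:ℝ) + δ) - (1 + δ) * Real.log (1 + δ)) := by
        rw [ha, hδ]
        field_simp
      have e2 : (b:ℝ) * ((k:ℝ) * Real.log b + -((b : ℝ) * ε ^ 2 * k) / 6)
          = (k:ℝ) * ((b:ℝ) * Real.log b - δ^2/6) := by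
        rw [hδ]
        field_simp
        ring
      have := mul_le_mul_of_nonneg_left scalar hk0.le
      have hmul : (b:ℝ) * ((k:ℝ) * Real.log ((b:ℝ) + δ) - a * Real.log (1 + δ))
          ≤ (b:ℝ) * ((k:ℝ) * Real.log b + -((b : ℝ) * ε ^ 2 * k) / 6) := by
        rw [e1, e2]; exact this
      exact le_of_mul_le_mul_left hmul hb0
end

section
/- Let t ≥ 2 be an integer and let ε and δ be real numbers with 0 < ε ≤ 1/t and 0 < δ < 1. Let k be the least integer greater than max(⌈6/ε⌉, −ln(δ/(2t))·6/ε²). Then for every base b with 2 ≤ b ≤ t and every integer k' ≥ k, the number of blocks x of length k' in base b with D(x,b) > ε is less than δ·b^{k'}. -/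
/-- The simple discrepancy `D(u, b)` of a block `u` of digits in base `b`: the maximum
over all digits `d < b` of `|occ(u,d)/|u| − 1/b|`. -/
noncomputable def simpleDisc (b : ℕ) (u : List ℕ) : ℝ :=
  sSup ((fun d => |(u.count d : ℝ) / u.length - 1 / (b : ℝ)|) '' {d : ℕ | d < b})

open Finset in
lemma aux_count (n : ℕ) (f : Fin n → ℕ) (d : ℕ) :
    (List.ofFn f).count d = ∑ j, if f j = d then 1 else 0 := by
  induction n with
  | zero => simp
  | succ m ih =>
    rw [List.ofFn_succ, List.count_cons, Fin.sum_univ_succ, ih]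
    simp only [beq_iff_eq]
    omega

open Finset in
lemma sum_pow_count (n b d : ℕ) (hd : d < b) (y : ℝ) :
    ∑ x : Fin n → Fin b, y ^ ((List.ofFn fun j => ((x j : ℕ))).count d)
      = ((b : ℝ) - 1 + y) ^ n := by
  have h1 : ∀ x : Fin n → Fin b, (y ^ ((List.ofFn fun j => ((x j : ℕ))).count d) : ℝ)
      = ∏ j, (if ((x j : ℕ)) = d then y else 1) := by
    intro x
    rw [aux_count, ← Finset.prod_pow_eq_pow_sum]
    exact Finset.prod_congr rfl fun j _ => by split <;> simp
  simp_rw [h1]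
  rw [← Fintype.piFinset_univ,
    ← Finset.prod_univ_sum (fun _ : Fin n => (Finset.univ : Finset (Fin b)))
      (fun _ v => if (v : ℕ) = d then y else 1)]
  have h2 : ∑ v : Fin b, (if (v : ℕ) = d then y else 1) = (b : ℝ) - 1 + y := by
    have h3 : ∀ v : Fin b, ((if (v : ℕ) = d then y else 1 : ℝ))
        = (if v = (⟨d, hd⟩ : Fin b) then y - 1 else 0) + 1 := by
      intro v
      by_cases h : (v : ℕ) = d
      · simp [h, Fin.ext_iff]
      · simp [h, Fin.ext_iff]
    simp_rw [h3]
    rw [Finset.sum_add_distrib, Finset.sum_ite_eq' Finset.univ]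
    simp
    ring
  rw [h2, Finset.prod_const, Finset.card_univ, Fintype.card_fin]

lemma exp_le_quad {x : ℝ} (hx : |x| ≤ 1) : Real.exp x ≤ 1 + x + x ^ 2 := by
  have h := Real.exp_bound hx (n := 2) (by norm_num)
  have h2 : ∑ m ∈ Finset.range 2, x ^ m / m.factorial = 1 + x := by
    simp [Finset.sum_range_succ]
  rw [h2] at h
  have h3 := (abs_sub_le_iff.1 h).1
  have h4 : |x| ^ 2 = x ^ 2 := sq_abs x
  have h5 : ((2:ℕ).succ : ℝ) / ((2:ℕ).factorial * 2) = 3 / 4 := by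
    norm_num [Nat.factorial]
  rw [h4] at h3
  norm_num [Nat.factorial] at h3
  nlinarith [sq_nonneg x]

lemma tail_upper (n b d : ℕ) (hb : 2 ≤ b) (hd : d < b) (ε : ℝ) (hε : 0 < ε)
    (hε1 : ε ≤ 1 / 2) :
    (((Finset.univ : Finset (Fin n → Fin b)).filter fun x =>
        ((1 : ℝ) / b + ε) * n ≤ ((List.ofFn fun j => ((x j : ℕ))).count d : ℝ)).card : ℝ)
      ≤ (b : ℝ) ^ n * Real.exp (-(ε ^ 2 * n) / 2) := by
  classical
  have hb' : (2 : ℝ) ≤ b := by exact_mod_cast hb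
  set N : (Fin n → Fin b) → ℕ := fun x => ((List.ofFn fun j => ((x j : ℕ))).count d) with hN
  set a : ℝ := ((1 : ℝ) / b + ε) * n with ha
  set S := (Finset.univ : Finset (Fin n → Fin b)).filter fun x => a ≤ (N x : ℝ) with hS
  have step1 : (S.card : ℝ) * Real.exp (ε * a) ≤ ∑ x : Fin n → Fin b, Real.exp ε ^ N x := by
    have e1 : (S.card : ℝ) * Real.exp (ε * a) = ∑ _x ∈ S, Real.exp (ε * a) := by
      rw [Finset.sum_const, nsmul_eq_mul]
    rw [e1]
    calc ∑ x ∈ S, Real.exp (ε * a) ≤ ∑ x ∈ S, Real.exp ε ^ N x := by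
          refine Finset.sum_le_sum fun x hx => ?_
          have hxS : a ≤ (N x : ℝ) := (Finset.mem_filter.1 hx).2
          rw [← Real.exp_nat_mul]
          exact Real.exp_le_exp.2 (by nlinarith)
      _ ≤ ∑ x : Fin n → Fin b, Real.exp ε ^ N x :=
          Finset.sum_le_sum_of_subset_of_nonneg (Finset.filter_subset _ _)
            (fun x _ _ => pow_nonneg (Real.exp_pos ε).le _)
  have step2 : ∑ x : Fin n → Fin b, Real.exp ε ^ N x = ((b : ℝ) - 1 + Real.exp ε) ^ n :=
    sum_pow_count n b d hd _
  have hbase : (b : ℝ) - 1 + Real.exp ε ≤ b * Real.exp (ε / b + ε ^ 2 / 2) := by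
    have k1 : Real.exp ε ≤ 1 + ε + ε ^ 2 := exp_le_quad (by rw [abs_of_pos hε]; linarith)
    have k3 : 1 + (ε + ε ^ 2) / b ≤ Real.exp ((ε + ε ^ 2) / b) := by
      have := Real.add_one_le_exp ((ε + ε ^ 2) / b); linarith
    have k4 : Real.exp ((ε + ε ^ 2) / b) ≤ Real.exp (ε / b + ε ^ 2 / 2) := by
      apply Real.exp_le_exp.2
      rw [add_div]
      gcongr
    have k2 : (b : ℝ) + ε + ε ^ 2 = b * (1 + (ε + ε ^ 2) / b) := by
      field_simp
      ring_nf
    have k5 : (b : ℝ) * (1 + (ε + ε ^ 2) / b) ≤ b * Real.exp (ε / b + ε ^ 2 / 2) := by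
      apply mul_le_mul_of_nonneg_left (k3.trans k4) (by linarith)
    linarith
  have hbnn : (0 : ℝ) ≤ (b : ℝ) - 1 + Real.exp ε := by
    have := (Real.exp_pos ε).le; linarith
  have step3 : ((b : ℝ) - 1 + Real.exp ε) ^ n ≤ ((b : ℝ) * Real.exp (ε / b + ε ^ 2 / 2)) ^ n :=
    pow_le_pow_left₀ hbnn hbase n
  have key : (S.card : ℝ) * Real.exp (ε * a)
      ≤ ((b : ℝ) * Real.exp (ε / b + ε ^ 2 / 2)) ^ n := by
    calc (S.card : ℝ) * Real.exp (ε * a) ≤ _ := step1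
      _ = _ := step2
      _ ≤ _ := step3
  have final : (S.card : ℝ)
      ≤ ((b : ℝ) * Real.exp (ε / b + ε ^ 2 / 2)) ^ n * Real.exp (-(ε * a)) := by
    have e2 : (S.card : ℝ) = (S.card : ℝ) * Real.exp (ε * a) * Real.exp (-(ε * a)) := by
      rw [mul_assoc, ← Real.exp_add]; simp
    rw [e2]
    exact mul_le_mul_of_nonneg_right key (Real.exp_pos _).le
  have e3 : ((b : ℝ) * Real.exp (ε / b + ε ^ 2 / 2)) ^ n * Real.exp (-(ε * a))
      = (b : ℝ) ^ n * Real.exp (-(ε ^ 2 * n) / 2) := by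
    rw [mul_pow, ← Real.exp_nat_mul, mul_assoc, ← Real.exp_add]
    congr 1
    rw [ha]
    ring
  rw [e3] at final
  exact final

lemma tail_lower (n b d : ℕ) (hb : 2 ≤ b) (hd : d < b) (ε : ℝ) (hε : 0 < ε)
    (hε1 : ε ≤ 1 / 2) :
    (((Finset.univ : Finset (Fin n → Fin b)).filter fun x =>
        ((List.ofFn fun j => ((x j : ℕ))).count d : ℝ) ≤ ((1 : ℝ) / b - ε) * n).card : ℝ)
      ≤ (b : ℝ) ^ n * Real.exp (-(ε ^ 2 * n) / 2) := by
  classical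
  have hb' : (2 : ℝ) ≤ b := by exact_mod_cast hb
  set N : (Fin n → Fin b) → ℕ := fun x => ((List.ofFn fun j => ((x j : ℕ))).count d) with hN
  set a : ℝ := ((1 : ℝ) / b - ε) * n with ha
  set S := (Finset.univ : Finset (Fin n → Fin b)).filter fun x => (N x : ℝ) ≤ a with hS
  have step1 : (S.card : ℝ) * Real.exp (-ε * a) ≤ ∑ x : Fin n → Fin b, Real.exp (-ε) ^ N x := by
    have e1 : (S.card : ℝ) * Real.exp (-ε * a) = ∑ _x ∈ S, Real.exp (-ε * a) := by
      rw [Finset.sum_const, nsmul_eq_mul]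
    rw [e1]
    calc ∑ x ∈ S, Real.exp (-ε * a) ≤ ∑ x ∈ S, Real.exp (-ε) ^ N x := by
          refine Finset.sum_le_sum fun x hx => ?_
          have hxS : (N x : ℝ) ≤ a := (Finset.mem_filter.1 hx).2
          rw [← Real.exp_nat_mul]
          exact Real.exp_le_exp.2 (by nlinarith)
      _ ≤ ∑ x : Fin n → Fin b, Real.exp (-ε) ^ N x :=
          Finset.sum_le_sum_of_subset_of_nonneg (Finset.filter_subset _ _)
            (fun x _ _ => pow_nonneg (Real.exp_pos (-ε)).le _)
  have step2 : ∑ x : Fin n → Fin b, Real.exp (-ε) ^ N x = ((b : ℝ) - 1 + Real.exp (-ε)) ^ n :=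
    sum_pow_count n b d hd _
  have hbase : (b : ℝ) - 1 + Real.exp (-ε) ≤ b * Real.exp (-ε / b + ε ^ 2 / 2) := by
    have k1 : Real.exp (-ε) ≤ 1 + -ε + (-ε) ^ 2 := exp_le_quad (by rw [abs_neg, abs_of_pos hε]; linarith)
    have k3 : 1 + (-ε + ε ^ 2) / b ≤ Real.exp ((-ε + ε ^ 2) / b) := by
      have := Real.add_one_le_exp ((-ε + ε ^ 2) / b); linarith
    have k4 : Real.exp ((-ε + ε ^ 2) / b) ≤ Real.exp (-ε / b + ε ^ 2 / 2) := by
      apply Real.exp_le_exp.2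
      rw [add_div]
      gcongr
    have k2 : (b : ℝ) + -ε + ε ^ 2 = b * (1 + (-ε + ε ^ 2) / b) := by
      field_simp
      ring_nf
    have k5 : (b : ℝ) * (1 + (-ε + ε ^ 2) / b) ≤ b * Real.exp (-ε / b + ε ^ 2 / 2) := by
      apply mul_le_mul_of_nonneg_left (k3.trans k4) (by linarith)
    nlinarith [sq_nonneg ε]
  have hbnn : (0 : ℝ) ≤ (b : ℝ) - 1 + Real.exp (-ε) := by
    have := (Real.exp_pos (-ε)).le; linarith
  have step3 : ((b : ℝ) - 1 + Real.exp (-ε)) ^ n ≤ ((b : ℝ) * Real.exp (-ε / b + ε ^ 2 / 2)) ^ n :=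
    pow_le_pow_left₀ hbnn hbase n
  have key : (S.card : ℝ) * Real.exp (-ε * a)
      ≤ ((b : ℝ) * Real.exp (-ε / b + ε ^ 2 / 2)) ^ n := by
    calc (S.card : ℝ) * Real.exp (-ε * a) ≤ _ := step1
      _ = _ := step2
      _ ≤ _ := step3
  have final : (S.card : ℝ)
      ≤ ((b : ℝ) * Real.exp (-ε / b + ε ^ 2 / 2)) ^ n * Real.exp (-(-ε * a)) := by
    have e2 : (S.card : ℝ) = (S.card : ℝ) * Real.exp (-ε * a) * Real.exp (-(-ε * a)) := by
      rw [mul_assoc, ← Real.exp_add]; simp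
    rw [e2]
    exact mul_le_mul_of_nonneg_right key (Real.exp_pos _).le
  have e3 : ((b : ℝ) * Real.exp (-ε / b + ε ^ 2 / 2)) ^ n * Real.exp (-(-ε * a))
      = (b : ℝ) ^ n * Real.exp (-(ε ^ 2 * n) / 2) := by
    rw [mul_pow, ← Real.exp_nat_mul, mul_assoc, ← Real.exp_add]
    congr 1
    rw [ha]
    ring
  rw [e3] at final
  exact final

/-- Let `t ≥ 2`, let `0 < ε ≤ 1/t` and `0 < δ < 1`, and let `k` be the least integer
greater than `max(⌈6/ε⌉, −ln(δ/(2t))·6/ε²)`.  Then for every base `b` with `2 ≤ b ≤ t`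
and every `k' ≥ k`, the number of blocks `x` of length `k'` in base `b` with
`D(x,b) > ε` is less than `δ · b^{k'}`. -/
theorem fraction_of_large_discrepancy_blocks_lt
    (t : ℕ) (ht : 2 ≤ t) (ε δ : ℝ) (hε : 0 < ε) (hεt : ε ≤ 1 / (t : ℝ))
    (hδ : 0 < δ) (hδ1 : δ < 1) (k : ℤ)
    (hk₁ : (k : ℝ) > max ((⌈6 / ε⌉ : ℤ) : ℝ) (-Real.log (δ / (2 * (t : ℝ))) * 6 / ε ^ 2))
    (hk₂ : ∀ j : ℤ,
      (j : ℝ) > max ((⌈6 / ε⌉ : ℤ) : ℝ) (-Real.log (δ / (2 * (t : ℝ))) * 6 / ε ^ 2) → k ≤ j)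
    (b : ℕ) (hb : 2 ≤ b) (hbt : b ≤ t) (k' : ℕ) (hk' : k ≤ (k' : ℤ)) :
    (((Finset.univ : Finset (Fin k' → Fin b)).filter fun x =>
        ε < simpleDisc b (List.ofFn fun j => ((x j : ℕ)))).card : ℝ) < δ * (b : ℝ) ^ k' := by
  classical
  have ht' : (2 : ℝ) ≤ t := by exact_mod_cast ht
  have hb' : (2 : ℝ) ≤ b := by exact_mod_cast hb
  have hbt' : (b : ℝ) ≤ t := by exact_mod_cast hbt
  have hε2 : ε ≤ 1 / 2 := hεt.trans (by
    rw [div_le_div_iff₀ (by linarith) (by norm_num)]; linarith)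
  -- k' is positive
  have hceil : (6 : ℝ) / ε ≤ ((⌈6 / ε⌉ : ℤ) : ℝ) := Int.le_ceil _
  have h6ε : (0 : ℝ) < 6 / ε := by positivity
  have hkpos : (0 : ℝ) < (k : ℝ) :=
    h6ε.trans_le (hceil.trans ((le_max_left _ _).trans hk₁.le))
  have hkk' : (k : ℝ) ≤ (k' : ℝ) := by exact_mod_cast hk'
  have hn : (0 : ℝ) < (k' : ℝ) := hkpos.trans_le hkk'
  -- the exponential bound
  set E : ℝ := Real.exp (-(ε ^ 2 * (k' : ℕ)) / 2) with hE
  have hEpos : 0 < E := Real.exp_pos _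
  -- union bound sets
  set U : ℕ → Finset (Fin k' → Fin b) := fun d =>
    (Finset.univ : Finset (Fin k' → Fin b)).filter fun x =>
      ((1 : ℝ) / b + ε) * k' ≤ ((List.ofFn fun j => ((x j : ℕ))).count d : ℝ) with hU
  set L : ℕ → Finset (Fin k' → Fin b) := fun d =>
    (Finset.univ : Finset (Fin k' → Fin b)).filter fun x =>
      ((List.ofFn fun j => ((x j : ℕ))).count d : ℝ) ≤ ((1 : ℝ) / b - ε) * k' with hL
  set bad := (Finset.univ : Finset (Fin k' → Fin b)).filter fun x =>
    ε < simpleDisc b (List.ofFn fun j => ((x j : ℕ))) with hbad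
  have hsub : bad ⊆ (Finset.range b).biUnion fun d => U d ∪ L d := by
    intro x hx
    have hx' : ε < simpleDisc b (List.ofFn fun j => ((x j : ℕ))) := (Finset.mem_filter.1 hx).2
    set u := List.ofFn fun j => ((x j : ℕ)) with hu
    set f : ℕ → ℝ := fun d => |(u.count d : ℝ) / u.length - 1 / (b : ℝ)| with hf
    have hfin : (f '' {d : ℕ | d < b}).Finite := (Set.finite_Iio b).image f
    have hne : (f '' {d : ℕ | d < b}).Nonempty :=
      ⟨f 0, Set.mem_image_of_mem f (show (0:ℕ) < b by omega)⟩
    have hmem : simpleDisc b u ∈ f '' {d : ℕ | d < b} := Set.Nonempty.csSup_mem hne hfin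
    obtain ⟨d, hd, hfd⟩ := hmem
    have hdb : d < b := hd
    have hlen : (u.length : ℝ) = (k' : ℝ) := by rw [hu, List.length_ofFn]
    have hεd : ε < |(u.count d : ℝ) / (k' : ℝ) - 1 / (b : ℝ)| := by
      rw [← hlen]; rw [← hfd] at hx'; exact hx'
    refine Finset.mem_biUnion.2 ⟨d, Finset.mem_range.2 hdb, ?_⟩
    rcases lt_abs.1 hεd with h | h
    · refine Finset.mem_union_left _ (Finset.mem_filter.2 ⟨Finset.mem_univ _, ?_⟩)
      have : (1 : ℝ) / b + ε < (u.count d : ℝ) / (k' : ℝ) := by linarith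
      exact ((lt_div_iff₀ hn).1 this).le
    · refine Finset.mem_union_right _ (Finset.mem_filter.2 ⟨Finset.mem_univ _, ?_⟩)
      have : (u.count d : ℝ) / (k' : ℝ) < (1 : ℝ) / b - ε := by linarith
      exact ((div_lt_iff₀ hn).1 this).le
  -- cardinality chain
  have hcard1 : (bad.card : ℝ) ≤ ∑ d ∈ Finset.range b, (((U d).card : ℝ) + ((L d).card : ℝ)) := by
    have h1 : bad.card ≤ ∑ d ∈ Finset.range b, ((U d ∪ L d).card) :=
      (Finset.card_le_card hsub).trans (Finset.card_biUnion_le)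
    have h2 : ∑ d ∈ Finset.range b, ((U d ∪ L d).card)
        ≤ ∑ d ∈ Finset.range b, ((U d).card + (L d).card) :=
      Finset.sum_le_sum fun d _ => Finset.card_union_le _ _
    calc (bad.card : ℝ) ≤ ((∑ d ∈ Finset.range b, ((U d).card + (L d).card) : ℕ) : ℝ) := by
          exact_mod_cast h1.trans h2
      _ = ∑ d ∈ Finset.range b, (((U d).card : ℝ) + ((L d).card : ℝ)) := by
          push_cast; ring
  have hcard2 : ∑ d ∈ Finset.range b, (((U d).card : ℝ) + ((L d).card : ℝ))
      ≤ (b : ℝ) * (2 * ((b : ℝ) ^ k' * E)) := by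
    have h3 : ∀ d ∈ Finset.range b, (((U d).card : ℝ) + ((L d).card : ℝ))
        ≤ 2 * ((b : ℝ) ^ k' * E) := by
      intro d hd
      have hdb : d < b := Finset.mem_range.1 hd
      have h4 := tail_upper k' b d hb hdb ε hε hε2
      have h5 := tail_lower k' b d hb hdb ε hε hε2
      rw [hU, hL]
      simp only
      rw [hE]
      linarith
    calc ∑ d ∈ Finset.range b, (((U d).card : ℝ) + ((L d).card : ℝ))
        ≤ ∑ _d ∈ Finset.range b, 2 * ((b : ℝ) ^ k' * E) := Finset.sum_le_sum h3
      _ = (b : ℝ) * (2 * ((b : ℝ) ^ k' * E)) := by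
          rw [Finset.sum_const, Finset.card_range, nsmul_eq_mul]
  -- numeric estimate:  2 * b * E < δ
  have hlog : -Real.log (δ / (2 * (t : ℝ))) * 6 / ε ^ 2 < (k' : ℝ) :=
    lt_of_le_of_lt (le_max_right _ _) (hk₁.trans_le hkk')
  have hδt : (0 : ℝ) < δ / (2 * (t : ℝ)) := by positivity
  have hexp : Real.exp (-(ε ^ 2 * (k' : ℝ)) / 6) < δ / (2 * (t : ℝ)) := by
    rw [← Real.exp_log hδt]
    apply Real.exp_lt_exp.2
    have hε2pos : (0 : ℝ) < ε ^ 2 := by positivity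
    have := (div_lt_iff₀ hε2pos).1 hlog
    linarith
  have hE6 : E ≤ Real.exp (-(ε ^ 2 * (k' : ℝ)) / 6) := by
    apply Real.exp_le_exp.2
    have : (0 : ℝ) ≤ ε ^ 2 * (k' : ℝ) := by positivity
    linarith
  have hfinal : (b : ℝ) * (2 * ((b : ℝ) ^ k' * E)) < δ * (b : ℝ) ^ k' := by
    have hbk : (0 : ℝ) < (b : ℝ) ^ k' := by positivity
    have h7 : (b : ℝ) * (2 * E) ≤ (t : ℝ) * (2 * E) := by
      apply mul_le_mul_of_nonneg_right hbt' (by positivity)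
    have h8 : (t : ℝ) * (2 * E) < δ := by
      have h9 : E < δ / (2 * (t : ℝ)) := lt_of_le_of_lt hE6 hexp
      have h10 : (t : ℝ) * (2 * E) < (t : ℝ) * (2 * (δ / (2 * (t : ℝ)))) := by
        apply mul_lt_mul_of_pos_left (by linarith) (by linarith)
      have h11 : (t : ℝ) * (2 * (δ / (2 * (t : ℝ)))) = δ := by
        field_simp
      linarith
    calc (b : ℝ) * (2 * ((b : ℝ) ^ k' * E)) = ((b : ℝ) * (2 * E)) * (b : ℝ) ^ k' := by ring
      _ < δ * (b : ℝ) ^ k' := by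
          apply mul_lt_mul_of_pos_right (h7.trans_lt h8) hbk
  exact (hcard1.trans hcard2).trans_lt hfinal
end

section
/- For every base b ≥ 2, the set of real numbers that are normal to base b is Π⁰₃ in the Borel hierarchy; that is, there is a family (C_{n,m})_{n,m∈ℕ} of closed subsets of ℝ such that {R ∈ ℝ : R is normal to base b} = ⋂_n ⋃_m C_{n,m}. -/
open Filter

/-- The `(i+1)`-st digit (for `i = 0, 1, 2, ...`) of the base-`b` expansion of the
fractional part of a real `R`.  For `R ∈ [0,1)` this is the unique expansion of `R`
whose digits are not eventually all equal to `b - 1`; for general `R`, normality is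
defined via the fractional part. -/
noncomputable def rdigit (b : ℕ) (R : ℝ) (i : ℕ) : ℕ :=
  (⌊Int.fract R * (b : ℝ) ^ (i + 1)⌋).toNat % b

/-- The block consisting of the first `n` digits of the base-`b` expansion of `R`. -/
noncomputable def rdigits (b : ℕ) (R : ℝ) (n : ℕ) : List ℕ := (List.range n).map (rdigit b R)

/-- `R` is simply normal to base `b`: every digit `d < b` occurs with limiting
frequency `1/b` in the base-`b` expansion of `R`. -/
def SimplyNormal (b : ℕ) (R : ℝ) : Prop :=
  ∀ d < b, Tendsto (fun n => ((rdigits b R n).count d : ℝ) / n) atTop (nhds (1 / (b : ℝ)))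

/-- `R` is normal to base `b`: it is simply normal to base `b ^ ℓ` for every `ℓ ≥ 1`. -/
def NormalBase (b : ℕ) (R : ℝ) : Prop := ∀ ℓ : ℕ, 1 ≤ ℓ → SimplyNormal (b ^ ℓ) R

/-- `R` is absolutely normal: normal to every base `b ≥ 2`. -/
def AbsolutelyNormal (R : ℝ) : Prop := ∀ b : ℕ, 2 ≤ b → NormalBase b R

/-- `R` is absolutely abnormal: normal to no base `b ≥ 2`. -/
def AbsolutelyAbnormal (R : ℝ) : Prop := ∀ b : ℕ, 2 ≤ b → ¬ NormalBase b R

namespace Pi03Aux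

/-- `R` is not a `b`-adic rational (modulo integers). -/
def NotAdic (b : ℕ) (R : ℝ) : Prop := ∀ (k : ℕ) (z : ℤ), Int.fract R * (b : ℝ) ^ k ≠ (z : ℝ)

/-- Approximation set: if `d` is a valid base-`b'` digit, the frequency of `d` among the
first `n` digits is within `1/(k+1)` of `1/b'`. -/
noncomputable def Aset (b' d k n : ℕ) : Set ℝ :=
  {R | d < b' → |((rdigits b' R n).count d : ℝ) / n - 1 / (b' : ℝ)| ≤ 1 / ((k : ℝ) + 1)}

lemma floor_eventually_const {x : ℝ} (hx : ∀ z : ℤ, x ≠ (z : ℝ)) :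
    ∀ᶠ y in nhds x, ⌊y⌋ = ⌊x⌋ := by
  have h1 : x ∈ Set.Ioo ((⌊x⌋ : ℝ)) ((⌊x⌋ : ℝ) + 1) :=
    ⟨lt_of_le_of_ne (Int.floor_le x) (Ne.symm (hx _)), Int.lt_floor_add_one x⟩
  filter_upwards [isOpen_Ioo.mem_nhds h1] with y hy
  refine Int.floor_eq_iff.mpr ⟨hy.1.le, by exact_mod_cast hy.2⟩

lemma NotAdic.not_int {b : ℕ} {R : ℝ} (h : NotAdic b R) : ∀ z : ℤ, R ≠ (z : ℝ) := by
  intro z hz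
  have h0 := h 0 0
  simp [hz, Int.fract_intCast] at h0

lemma fract_floor_eventually {R : ℝ} (c : ℝ) (hR : ∀ z : ℤ, R ≠ (z : ℝ))
    (hy : ∀ z : ℤ, Int.fract R * c ≠ (z : ℝ)) :
    ∀ᶠ R' in nhds R, ⌊Int.fract R' * c⌋ = ⌊Int.fract R * c⌋ := by
  have h1 := floor_eventually_const hR
  have h2 : ContinuousAt (fun R' : ℝ => (R' - (⌊R⌋ : ℝ)) * c) R := by fun_prop
  have h2' : (fun R' : ℝ => (R' - (⌊R⌋ : ℝ)) * c) R = Int.fract R * c := by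
    show (R - (⌊R⌋ : ℝ)) * c = _
    rw [Int.self_sub_floor]
  have h2t : Tendsto (fun R' : ℝ => (R' - (⌊R⌋ : ℝ)) * c) (nhds R) (nhds (Int.fract R * c)) := by
    rw [← h2']; exact h2
  have h3 := h2t.eventually (floor_eventually_const hy)
  filter_upwards [h1, h3] with R' e1 e3
  rw [← Int.self_sub_floor R', e1]
  exact e3

lemma rdigits_eventually (b ℓ n : ℕ) {R : ℝ} (h : NotAdic b R) :
    ∀ᶠ R' in nhds R, rdigits (b ^ ℓ) R' n = rdigits (b ^ ℓ) R n := by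
  have key : ∀ i : ℕ, ∀ᶠ R' in nhds R, rdigit (b ^ ℓ) R' i = rdigit (b ^ ℓ) R i := by
    intro i
    have hc : ∀ z : ℤ, Int.fract R * ((b ^ ℓ : ℕ) : ℝ) ^ (i + 1) ≠ (z : ℝ) := by
      intro z hz
      refine h (ℓ * (i + 1)) z ?_
      rw [pow_mul]
      exact_mod_cast hz
    have hev := fract_floor_eventually (((b ^ ℓ : ℕ) : ℝ) ^ (i + 1)) h.not_int hc
    filter_upwards [hev] with R' e
    unfold rdigit
    rw [e]
  have hall : ∀ᶠ R' in nhds R, ∀ i ∈ Finset.range n, rdigit (b ^ ℓ) R' i = rdigit (b ^ ℓ) R i :=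
    (Filter.eventually_all_finset _).mpr fun i _ => key i
  filter_upwards [hall] with R' e
  unfold rdigits
  exact List.map_congr_left fun a ha => e a (Finset.mem_range.mpr (List.mem_range.mp ha))

lemma mem_Aset_of_closure {b ℓ d k n : ℕ} {R : ℝ} (h : NotAdic b R)
    (hc : R ∈ closure (Aset (b ^ ℓ) d k n)) : R ∈ Aset (b ^ ℓ) d k n := by
  obtain ⟨R', hR'⟩ := mem_closure_iff_nhds.mp hc _ (rdigits_eventually b ℓ n h)
  have h1 : rdigits (b ^ ℓ) R' n = rdigits (b ^ ℓ) R n := hR'.1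
  have h2 : R' ∈ Aset (b ^ ℓ) d k n := hR'.2
  simp only [Aset, Set.mem_setOf_eq] at h2 ⊢
  intro hd
  have := h2 hd
  rwa [h1] at this

lemma rdigit_eq_zero {b k : ℕ} (hb : 2 ≤ b) {R : ℝ} {z : ℤ}
    (hz : Int.fract R * (b : ℝ) ^ k = (z : ℝ)) {i : ℕ} (hi : k ≤ i) :
    rdigit b R i = 0 := by
  have hbpos : (0 : ℝ) < (b : ℝ) ^ k := by positivity
  have hz0 : 0 ≤ z := by
    have : (0 : ℝ) ≤ (z : ℝ) := hz ▸ mul_nonneg (Int.fract_nonneg R) hbpos.le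
    exact_mod_cast this
  have key : Int.fract R * (b : ℝ) ^ (i + 1) = ((z * (b : ℤ) ^ (i + 1 - k) : ℤ) : ℝ) := by
    have hsplit : (b : ℝ) ^ (i + 1) = (b : ℝ) ^ k * (b : ℝ) ^ (i + 1 - k) := by
      rw [← pow_add]; congr 1; omega
    rw [hsplit, ← mul_assoc, hz]; push_cast; ring
  unfold rdigit
  rw [key, Int.floor_intCast]
  have htn : (z * (b : ℤ) ^ (i + 1 - k)).toNat = z.toNat * b ^ (i + 1 - k) := by
    rcases Int.eq_ofNat_of_zero_le hz0 with ⟨m, rfl⟩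
    rw [← Nat.cast_pow, ← Nat.cast_mul, Int.toNat_natCast, Int.toNat_natCast]
  rw [htn]
  have hdvd : b ∣ z.toNat * b ^ (i + 1 - k) :=
    Dvd.dvd.mul_left (dvd_pow_self b (by omega)) _
  exact Nat.mod_eq_zero_of_dvd hdvd

lemma count_zero_ge {b : ℕ} {R : ℝ} {k : ℕ} (hz : ∀ i, k ≤ i → rdigit b R i = 0) :
    ∀ n, n - k ≤ (rdigits b R n).count 0 := by
  intro n
  induction n with
  | zero => simp [rdigits]
  | succ n ih =>
    show n + 1 - k ≤ (rdigits b R (n + 1)).count 0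
    unfold rdigits at ih ⊢
    rw [List.range_succ, List.map_append, List.count_append]
    rcases le_or_gt k n with h | h
    · have h1 : (List.map (rdigit b R) [n]).count 0 = 1 := by
        simp [hz n h]
      omega
    · omega

lemma not_simplyNormal {b : ℕ} (hb : 2 ≤ b) {R : ℝ} {k : ℕ} {z : ℤ}
    (hz : Int.fract R * (b : ℝ) ^ k = (z : ℝ)) : ¬ SimplyNormal b R := by
  intro hsn
  have hT := hsn 0 (by omega)
  have hcount := count_zero_ge (fun i hi => rdigit_eq_zero hb hz hi)
  have hg : Tendsto (fun n : ℕ => 1 - (k : ℝ) / n) atTop (nhds 1) := by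
    have h0 := tendsto_const_div_atTop_nhds_zero_nat (k : ℝ)
    have h1 : Tendsto (fun n : ℕ => (1 : ℝ) - (k : ℝ) / n) atTop (nhds (1 - 0)) :=
      (tendsto_const_nhds).sub h0
    simpa using h1
  have hle : (1 : ℝ) ≤ 1 / (b : ℝ) := by
    refine le_of_tendsto_of_tendsto hg hT ?_
    filter_upwards [eventually_ge_atTop 1] with n hn
    have hnpos : (0 : ℝ) < n := by exact_mod_cast hn
    have h1 : ((n - k : ℕ) : ℝ) ≤ ((rdigits b R n).count 0 : ℝ) := by exact_mod_cast hcount n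
    have h2 : (n : ℝ) - k ≤ ((rdigits b R n).count 0 : ℝ) := by
      rcases le_or_gt k n with h | h
      · rwa [Nat.cast_sub h] at h1
      · have hk : (n : ℝ) ≤ k := by exact_mod_cast h.le
        have : (0 : ℝ) ≤ ((rdigits b R n).count 0 : ℝ) := by positivity
        linarith
    have heq : (1 : ℝ) - (k : ℝ) / n = ((n : ℝ) - k) / n := by field_simp
    rw [heq]
    gcongr
  have hb2 : (2 : ℝ) ≤ (b : ℝ) := by exact_mod_cast hb
  have : 1 / (b : ℝ) ≤ 1 / 2 := by
    apply one_div_le_one_div_of_le <;> linarith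
  linarith

lemma tendsto_of_forall {f : ℕ → ℝ} {L : ℝ}
    (h : ∀ k : ℕ, ∃ N, ∀ n ≥ N, |f n - L| ≤ 1 / ((k : ℝ) + 1)) :
    Tendsto f atTop (nhds L) := by
  rw [Metric.tendsto_atTop]
  intro ε hε
  obtain ⟨k, hk⟩ := exists_nat_one_div_lt hε
  obtain ⟨N, hN⟩ := h k
  exact ⟨N, fun n hn => lt_of_le_of_lt (by rw [Real.dist_eq]; exact hN n hn) hk⟩

end Pi03Aux

open Pi03Aux in
/-- For every base `b ≥ 2`, the set of real numbers normal to base `b` is `Π⁰₃` in the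
Borel hierarchy: it is a countable intersection of countable unions of closed sets. -/
theorem normalBase_pi03 (b : ℕ) (hb : 2 ≤ b) :
    ∃ C : ℕ → ℕ → Set ℝ, (∀ n m, IsClosed (C n m)) ∧
      {R : ℝ | NormalBase b R} = ⋂ n, ⋃ m, C n m := by
  classical
  let e : ℕ ≃ ((ℕ × ℕ × ℕ) ⊕ (ℕ × ℤ)) := (Denumerable.eqv _).symm
  let F : ((ℕ × ℕ × ℕ) ⊕ (ℕ × ℤ)) → ℕ → Set ℝ := fun i m =>
    Sum.elim
      (fun p : ℕ × ℕ × ℕ => ⋂ j : ℕ, closure (Aset (b ^ (p.1 + 1)) p.2.1 p.2.2 (m + j)))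
      (fun q : ℕ × ℤ => {x : ℝ | 1 / ((m : ℝ) + 1) ≤ |x - (q.2 : ℝ) / (b : ℝ) ^ q.1|}) i
  refine ⟨fun n m => F (e n) m, ?_, ?_⟩
  · intro n m
    rcases he : e n with p | q
    · simp only [F, he, Sum.elim_inl]
      exact isClosed_iInter fun j => isClosed_closure
    · simp only [F, he, Sum.elim_inr]
      exact isClosed_le continuous_const (by fun_prop)
  · ext R
    simp only [Set.mem_setOf_eq, Set.mem_iInter, Set.mem_iUnion]
    have hiff : (∀ n : ℕ, ∃ m, R ∈ F (e n) m) ↔ ∀ i, ∃ m, R ∈ F i m := by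
      constructor
      · intro h i
        have := h (e.symm i)
        rwa [Equiv.apply_symm_apply] at this
      · intro h n; exact h (e n)
    rw [hiff, Sum.forall]
    constructor
    · intro hR
      have hna : NotAdic b R := by
        intro k z hz
        have hsn := hR 1 le_rfl
        rw [pow_one] at hsn
        exact not_simplyNormal hb hz hsn
      constructor
      · rintro ⟨ℓ', d, k⟩
        simp only [F, Sum.elim_inl, Set.mem_iInter]
        by_cases hd : d < b ^ (ℓ' + 1)
        · have hT := hR (ℓ' + 1) (by omega) d hd
          rw [Metric.tendsto_atTop] at hT
          obtain ⟨N, hN⟩ := hT (1 / ((k : ℝ) + 1)) (by positivity)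
          refine ⟨N, fun j => subset_closure ?_⟩
          simp only [Aset, Set.mem_setOf_eq]
          intro _
          have := hN (N + j) (Nat.le_add_right _ _)
          rw [Real.dist_eq] at this
          exact this.le
        · exact ⟨0, fun j => subset_closure fun hd' => absurd hd' hd⟩
      · rintro ⟨k, z⟩
        simp only [F, Sum.elim_inr, Set.mem_setOf_eq]
        have hbk : ((b : ℝ)) ^ k ≠ 0 := by positivity
        have hne : R ≠ (z : ℝ) / (b : ℝ) ^ k := by
          intro hR'
          refine hna k (z - ⌊R⌋ * (b : ℤ) ^ k) ?_
          rw [← Int.self_sub_floor, hR']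
          push_cast
          field_simp
        have hpos : 0 < |R - (z : ℝ) / (b : ℝ) ^ k| := abs_pos.mpr (sub_ne_zero.mpr hne)
        obtain ⟨m, hm⟩ := exists_nat_one_div_lt hpos
        exact ⟨m, hm.le⟩
    · rintro ⟨hp, hq⟩
      have hna : NotAdic b R := by
        intro k z hz
        obtain ⟨m, hm⟩ := hq (k, ⌊R⌋ * (b : ℤ) ^ k + z)
        simp only [F, Sum.elim_inr, Set.mem_setOf_eq] at hm
        have hbk : ((b : ℝ)) ^ k ≠ 0 := by positivity
        have hR' : R - ((⌊R⌋ * (b : ℤ) ^ k + z : ℤ) : ℝ) / (b : ℝ) ^ k = 0 := by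
          rw [← Int.self_sub_floor] at hz
          push_cast
          field_simp
          linarith [hz]
        rw [hR', abs_zero] at hm
        have h0 : (0 : ℝ) < 1 / ((m : ℝ) + 1) := by positivity
        linarith
      intro ℓ hℓ d hd
      obtain ⟨ℓ', rfl⟩ : ∃ ℓ', ℓ = ℓ' + 1 := ⟨ℓ - 1, by omega⟩
      apply tendsto_of_forall
      intro k
      obtain ⟨m, hm⟩ := hp (ℓ', d, k)
      simp only [F, Sum.elim_inl, Set.mem_iInter] at hm
      refine ⟨m, fun n hn => ?_⟩
      have hcl := hm (n - m)
      rw [Nat.add_sub_cancel' hn] at hcl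
      have hA := mem_Aset_of_closure (b := b) (ℓ := ℓ' + 1) hna hcl
      exact hA hd
end

section
/- The set of absolutely normal real numbers is Π⁰₃ in the Borel hierarchy; that is, there is a family (C_{n,m})_{n,m∈ℕ} of closed subsets of ℝ such that {R ∈ ℝ : R is absolutely normal} = ⋂_n ⋃_m C_{n,m}. -/
open Filter

namespace AbsNormalAux

/-! ### Auxiliary material for `absolutelyNormal_pi03` -/

/-- Base-`b` digits of an irrational number are locally constant. -/
lemma eventually_floor_eq {z : ℝ} (hz : Irrational z) :
    ∀ᶠ y in nhds z, ⌊y⌋ = ⌊z⌋ := by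
  have h1 : (⌊z⌋ : ℝ) < z := lt_of_le_of_ne (Int.floor_le z) (Ne.symm (hz.ne_int ⌊z⌋))
  have h2 : z < ⌊z⌋ + 1 := Int.lt_floor_add_one z
  filter_upwards [Ioo_mem_nhds h1 h2] with y hy
  exact Int.floor_eq_iff.mpr ⟨hy.1.le, by exact_mod_cast hy.2⟩

lemma eventually_rdigit_eq {b : ℕ} (hb : 0 < b) {R : ℝ} (hR : Irrational R) (i : ℕ) :
    ∀ᶠ x in nhds R, rdigit b x i = rdigit b R i := by
  set h : ℝ → ℝ := fun x => (x - (⌊R⌋ : ℝ)) * (b : ℝ) ^ (i + 1) with hh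
  have hfl : ∀ᶠ x in nhds R, ⌊x⌋ = ⌊R⌋ := eventually_floor_eq hR
  have hhR : Irrational (h R) := by
    have h1 : Irrational (R - (⌊R⌋ : ℝ)) := hR.sub_intCast ⌊R⌋
    have h2 : ((b : ℚ) ^ (i + 1) : ℚ) ≠ 0 := by positivity
    have := h1.mul_ratCast h2
    have hcast : (((b : ℚ) ^ (i + 1) : ℚ) : ℝ) = (b : ℝ) ^ (i + 1) := by push_cast; ring
    rwa [hcast] at this
  have hcont : ContinuousAt h R := by fun_prop
  have hev : ∀ᶠ x in nhds R, ⌊h x⌋ = ⌊h R⌋ := hcont.eventually (eventually_floor_eq hhR)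
  filter_upwards [hfl, hev] with x hx1 hx2
  have hfr : Int.fract x = x - (⌊R⌋ : ℝ) := by rw [← hx1]; exact (Int.self_sub_floor x).symm
  have hfrR : Int.fract R = R - (⌊R⌋ : ℝ) := (Int.self_sub_floor R).symm
  unfold rdigit
  rw [hfr, hfrR]
  rw [show (x - (⌊R⌋:ℝ)) * (b:ℝ) ^ (i+1) = h x from rfl,
      show (R - (⌊R⌋:ℝ)) * (b:ℝ) ^ (i+1) = h R from rfl, hx2]

lemma eventually_rdigits_eq {b : ℕ} (hb : 0 < b) {R : ℝ} (hR : Irrational R) (n : ℕ) :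
    ∀ᶠ x in nhds R, rdigits b x n = rdigits b R n := by
  have : ∀ᶠ x in nhds R, ∀ i ∈ Finset.range n, rdigit b x i = rdigit b R i := by
    rw [eventually_all_finset]
    intro i _
    exact eventually_rdigit_eq hb hR i
  filter_upwards [this] with x hx
  unfold rdigits
  exact List.map_congr_left (fun a ha => hx a (by simpa using List.mem_range.mp ha))

/-- The basic "error bound from stage `m` on" sets, whose closures form our `Π⁰₃` family. -/
def E (B d k m : ℕ) : Set ℝ :=
  {R | ∀ n, m ≤ n →
    |((rdigits B R n).count (d % B) : ℝ) / n - 1 / (B : ℝ)| ≤ 1 / (k + 1)}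

lemma mem_E_of_mem_closure {B d k m : ℕ} (hB : 0 < B) {R : ℝ} (hR : Irrational R)
    (h : R ∈ closure (E B d k m)) : R ∈ E B d k m := by
  intro n hn
  have hev : {x : ℝ | rdigits B x n = rdigits B R n} ∈ nhds R :=
    eventually_rdigits_eq hB hR n
  obtain ⟨x, hx1, hx2⟩ := mem_closure_iff_nhds.mp h _ hev
  have := hx2 n hn
  rwa [hx1] at this

/-! ### Rationals are not absolutely normal -/

lemma geom_aux (q : ℕ) : ∀ n : ℕ, q * (∑ j ∈ Finset.range n, (q + 1) ^ j) + 1 = (q + 1) ^ n := by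
  intro n
  induction n with
  | zero => simp
  | succ n ih =>
    calc q * (∑ j ∈ Finset.range (n+1), (q+1)^j) + 1
        = (q * (∑ j ∈ Finset.range n, (q+1)^j) + 1) + q * (q+1)^n := by
          rw [Finset.sum_range_succ]; ring
      _ = (q+1)^n + q*(q+1)^n := by rw [ih]
      _ = (q+1)^(n+1) := by ring

lemma rdigit_div {p q : ℕ} (hpq : p < q) (i : ℕ) :
    rdigit (q + 1) ((p : ℝ) / (q : ℝ)) i = p := by
  have hq : 0 < q := lt_of_le_of_lt (Nat.zero_le p) hpq
  have hq' : (0 : ℝ) < q := by exact_mod_cast hq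
  have hx0 : (0 : ℝ) ≤ (p : ℝ) / q := by positivity
  have hx1 : (p : ℝ) / q < 1 := by
    rw [div_lt_one hq']; exact_mod_cast hpq
  have hfr : Int.fract ((p : ℝ) / q) = (p : ℝ) / q := Int.fract_eq_self.mpr ⟨hx0, hx1⟩
  set S : ℕ := ∑ j ∈ Finset.range (i + 1), (q + 1) ^ j with hS
  have hgeom : q * S + 1 = (q + 1) ^ (i + 1) := geom_aux q (i + 1)
  have hval : (p : ℝ) / q * ((q : ℝ) + 1) ^ (i + 1) = ((p * S : ℕ) : ℝ) + (p : ℝ) / q := by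
    have : ((q : ℝ) + 1) ^ (i + 1) = ((q * S + 1 : ℕ) : ℝ) := by
      rw [hgeom]; push_cast; ring
    rw [this]; push_cast; field_simp
  have hfloor : ⌊Int.fract ((p : ℝ) / q) * ((q + 1 : ℕ) : ℝ) ^ (i + 1)⌋ = (p * S : ℕ) := by
    rw [hfr]
    have : (((q + 1 : ℕ) : ℝ)) ^ (i + 1) = ((q : ℝ) + 1) ^ (i + 1) := by push_cast; ring
    rw [this, hval]
    have h0 : ⌊(p : ℝ) / q⌋ = 0 := Int.floor_eq_zero_iff.mpr ⟨hx0, hx1⟩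
    have := Int.floor_intCast_add ((p * S : ℕ) : ℤ) ((p : ℝ) / q)
    push_cast at this ⊢
    rw [this, h0, add_zero]
  have hSmod : S % (q + 1) = 1 := by
    have hdvd : (q+1) ∣ ∑ k ∈ Finset.range i, (q+1)^(k+1) :=
      Finset.dvd_sum fun k _ => dvd_pow_self _ (Nat.succ_ne_zero k)
    obtain ⟨c, hc⟩ := hdvd
    rw [hS, Finset.sum_range_succ', hc, pow_zero, Nat.mul_add_mod]
    exact Nat.mod_eq_of_lt (by omega)
  unfold rdigit
  rw [hfloor]
  rw [Int.toNat_natCast]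
  rw [Nat.mul_mod, hSmod, mul_one, Nat.mod_mod_of_dvd _ dvd_rfl]
  exact Nat.mod_eq_of_lt (by omega)

lemma rat_not_absolutelyNormal (q : ℚ) : ¬ AbsolutelyNormal (q : ℝ) := by
  intro h
  set r : ℚ := Int.fract q with hr
  have hr0 : 0 ≤ r := Int.fract_nonneg q
  have hr1 : r < 1 := Int.fract_lt_one q
  set p : ℕ := r.num.toNat with hp
  set qd : ℕ := r.den with hqd
  have hnum : (r.num : ℚ) = (p : ℚ) := by
    rw [hp]; norm_cast; exact (Int.toNat_of_nonneg (Rat.num_nonneg.mpr hr0)).symm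
  have hpq : p < qd := by
    have hden : (0 : ℚ) < (qd : ℚ) := by exact_mod_cast r.pos
    have : (p : ℚ) < (qd : ℚ) := by
      have := Rat.num_div_den r
      rw [hnum] at this
      calc (p : ℚ) = r * qd := by rw [← this]; field_simp; rfl
        _ < 1 * qd := by exact mul_lt_mul_of_pos_right hr1 hden
        _ = qd := one_mul _
    exact_mod_cast this
  have hfr : Int.fract (q : ℝ) = (p : ℝ) / (qd : ℝ) := by
    have h1 : Int.fract (q : ℝ) = ((r : ℚ) : ℝ) := by
      rw [hr]
      unfold Int.fract
      push_cast [Rat.floor_cast]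
      ring
    rw [h1, ← Rat.num_div_den r, hnum]
    push_cast
    rfl
  -- digits of q in base qd+1 are all equal to p
  have hdig : ∀ i, rdigit (qd + 1) (q : ℝ) i = p := by
    intro i
    have : rdigit (qd + 1) (q : ℝ) i = rdigit (qd + 1) ((p : ℝ) / (qd : ℝ)) i := by
      unfold rdigit
      rw [← hfr, Int.fract_fract]
    rw [this]
    exact rdigit_div hpq i
  have hB2 : 2 ≤ qd + 1 := by have := r.pos; omega
  have hsn : SimplyNormal ((qd + 1) ^ 1) (q : ℝ) := h (qd + 1) hB2 1 le_rfl
  rw [pow_one] at hsn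
  have htd : Tendsto (fun n => ((rdigits (qd + 1) (q : ℝ) n).count p : ℝ) / n) atTop
      (nhds (1 / ((qd + 1 : ℕ) : ℝ))) := hsn p (by omega)
  have hcount : ∀ n, (rdigits (qd + 1) (q : ℝ) n).count p = n := by
    intro n
    unfold rdigits
    have : (List.range n).map (rdigit (qd + 1) (q:ℝ)) = List.replicate n p := by
      refine List.eq_replicate_iff.mpr ⟨by simp, ?_⟩
      intro a ha
      obtain ⟨i, _, rfl⟩ := List.mem_map.mp ha
      exact hdig i
    rw [this, List.count_replicate_self]
  have htd1 : Tendsto (fun n => ((rdigits (qd + 1) (q : ℝ) n).count p : ℝ) / n) atTop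
      (nhds 1) := by
    have : ∀ᶠ n : ℕ in atTop, ((rdigits (qd + 1) (q : ℝ) n).count p : ℝ) / n = 1 := by
      filter_upwards [eventually_ge_atTop 1] with n hn
      rw [hcount n]
      field_simp
    exact Tendsto.congr' (Filter.EventuallyEq.symm this) tendsto_const_nhds
  have := tendsto_nhds_unique htd htd1
  have hlt : 1 / ((qd + 1 : ℕ) : ℝ) < 1 := by
    rw [div_lt_one (by positivity)]
    exact_mod_cast hB2.trans_lt' one_lt_two |>.trans_le' (by norm_num)
  rw [this] at hlt
  exact lt_irrefl _ hlt

/-- The indexed family of closed sets: removal of single rationals, plus closures of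
the error-bound sets `E`. -/
noncomputable def D : ℚ ⊕ ℕ × ℕ × ℕ × ℕ → ℕ → Set ℝ
  | Sum.inl q, m => {x : ℝ | 1 / ((m : ℝ) + 1) ≤ |x - (q : ℝ)|}
  | Sum.inr (b, l, d, k), m => closure (E ((b + 2) ^ (l + 1)) d k m)

lemma isClosed_D : ∀ i m, IsClosed (D i m) := by
  rintro (q | ⟨b, l, d, k⟩) m
  · exact isClosed_le continuous_const ((continuous_id.sub continuous_const).abs)
  · exact isClosed_closure

lemma main_eq : {R : ℝ | AbsolutelyNormal R} = ⋂ i, ⋃ m, D i m := by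
  ext R
  simp only [Set.mem_setOf_eq, Set.mem_iInter, Set.mem_iUnion]
  constructor
  · rintro h (q | ⟨b, l, d, k⟩)
    · have hne : R ≠ (q : ℝ) := fun he => rat_not_absolutelyNormal q (he ▸ h)
      have hpos : 0 < |R - (q : ℝ)| := abs_pos.mpr (sub_ne_zero.mpr hne)
      obtain ⟨m, hm⟩ := exists_nat_one_div_lt hpos
      exact ⟨m, hm.le⟩
    · set B := (b + 2) ^ (l + 1) with hB
      have hsn : SimplyNormal B R := h (b + 2) (by omega) (l + 1) (by omega)
      have htd := hsn (d % B) (Nat.mod_lt _ (pow_pos (by omega) _))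
      obtain ⟨m, hm⟩ := (Metric.tendsto_atTop.mp htd) (1 / ((k : ℝ) + 1)) (by positivity)
      refine ⟨m, subset_closure ?_⟩
      intro n hn
      have := hm n hn
      rw [Real.dist_eq] at this
      exact this.le
  · intro h
    have hirr : Irrational R := by
      rintro ⟨q, rfl⟩
      obtain ⟨m, hm⟩ := h (Sum.inl q)
      have hm' : 1 / ((m : ℝ) + 1) ≤ |(q : ℝ) - (q : ℝ)| := hm
      rw [sub_self, abs_zero] at hm' 
      have : (0 : ℝ) < 1 / ((m : ℝ) + 1) := by positivity
      linarith
    intro b hb l hl d hd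
    rw [Metric.tendsto_atTop]
    intro ε hε
    obtain ⟨k, hk⟩ := exists_nat_one_div_lt hε
    obtain ⟨m, hm⟩ := h (Sum.inr (b - 2, l - 1, d, k))
    have hBe : (b - 2 + 2) ^ (l - 1 + 1) = b ^ l := by
      congr 1 <;> omega
    rw [show D (Sum.inr (b - 2, l - 1, d, k)) m
        = closure (E ((b - 2 + 2) ^ (l - 1 + 1)) d k m) from rfl, hBe] at hm
    have hE := mem_E_of_mem_closure (pow_pos (by omega : 0 < b) l) hirr hm
    refine ⟨m, fun n hn => ?_⟩
    have := hE n hn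
    rw [Nat.mod_eq_of_lt hd] at this
    rw [Real.dist_eq]
    exact lt_of_le_of_lt this hk

end AbsNormalAux

/-- The set of absolutely normal real numbers is `Π⁰₃` in the Borel hierarchy: it is a
countable intersection of countable unions of closed sets. -/
theorem absolutelyNormal_pi03 :
    ∃ C : ℕ → ℕ → Set ℝ, (∀ n m, IsClosed (C n m)) ∧
      {R : ℝ | AbsolutelyNormal R} = ⋂ n, ⋃ m, C n m := by
  refine ⟨fun n m => AbsNormalAux.D (Denumerable.ofNat (ℚ ⊕ ℕ × ℕ × ℕ × ℕ) n) m,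
    fun n m => AbsNormalAux.isClosed_D _ _, ?_⟩
  rw [AbsNormalAux.main_eq]
  ext x
  simp only [Set.mem_iInter]
  constructor
  · intro hx n
    exact hx _
  · intro hx i
    obtain ⟨n, rfl⟩ : ∃ n, Denumerable.ofNat (ℚ ⊕ ℕ × ℕ × ℕ × ℕ) n = i :=
      ⟨@Encodable.encode _ Denumerable.toEncodable i, Denumerable.ofNat_encode i⟩
    exact hx n
end

section
/- The set of absolutely abnormal real numbers is Π⁰₄ in the Borel hierarchy; that is, there is a family (U_{n,m,k})_{n,m,k∈ℕ} of open subsets of ℝ such that {R ∈ ℝ : R is absolutely abnormal} = ⋂_n ⋃_m ⋂_k U_{n,m,k}. -/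
open Filter

lemma floor_div_nat' (a : ℝ) (n : ℕ) (hn : 0 < n) : ⌊a / (n:ℝ)⌋ = ⌊a⌋ / (n:ℤ) := by
  have hn' : (0:ℝ) < (n:ℝ) := by exact_mod_cast hn
  have hnz : (n:ℤ) ≠ 0 := by exact_mod_cast hn.ne'
  set q : ℤ := ⌊a⌋ / (n:ℤ) with hq
  have hr : ⌊a⌋ % (n:ℤ) + (n:ℤ) * q = ⌊a⌋ := Int.emod_add_mul_ediv _ _
  have hr0 : 0 ≤ ⌊a⌋ % (n:ℤ) := Int.emod_nonneg _ hnz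
  have hrn : ⌊a⌋ % (n:ℤ) < (n:ℤ) := Int.emod_lt_of_pos _ (by exact_mod_cast hn)
  rw [Int.floor_eq_iff]
  constructor
  · rw [le_div_iff₀ hn']
    have : ((n:ℤ) * q : ℤ) ≤ ⌊a⌋ := by omega
    calc (q:ℝ) * n = (((n:ℤ) * q : ℤ) : ℝ) := by push_cast; ring
    _ ≤ (⌊a⌋ : ℝ) := by exact_mod_cast this
    _ ≤ a := Int.floor_le a
  · rw [div_lt_iff₀ hn']
    have hx : (n:ℤ) * (q+1) = n*q + n := by ring
    have h2 : ⌊a⌋ + 1 ≤ (n:ℤ) * (q + 1) := by omega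
    calc a < (⌊a⌋ : ℝ) + 1 := Int.lt_floor_add_one a
    _ ≤ (((n:ℤ) * (q+1) : ℤ) : ℝ) := by exact_mod_cast h2
    _ = (q + 1) * n := by push_cast; ring

def gdig (b t : ℕ) (M : ℤ) (i : ℕ) : ℕ :=
  ((M / (b:ℤ)^(t-i-1) - (M / (b:ℤ)^t) * (b:ℤ)^(i+1)).toNat) % b

lemma rdigit_eq_gdig (b : ℕ) (hb : 0 < b) (t i : ℕ) (hi : i < t) (R : ℝ) :
    rdigit b R i = gdig b t ⌊R * (b:ℝ)^t⌋ i := by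
  have hbR : (0:ℝ) < (b:ℝ) := by exact_mod_cast hb
  have hsplit : (b:ℝ)^t = (b:ℝ)^(i+1) * (b:ℝ)^(t-i-1) := by
    rw [← pow_add]; congr 1; omega
  have hpos1 : 0 < b^(t-i-1) := Nat.pow_pos hb
  have hpos2 : 0 < b^t := Nat.pow_pos hb
  have hB : ⌊R * (b:ℝ)^(i+1)⌋ = ⌊R * (b:ℝ)^t⌋ / (b:ℤ)^(t-i-1) := by
    have h1 : R * (b:ℝ)^(i+1) = (R * (b:ℝ)^t) / ((b^(t-i-1) : ℕ) : ℝ) := by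
      rw [hsplit]; push_cast
      field_simp
    rw [h1, floor_div_nat' _ _ hpos1]
    congr 1
  have hC : ⌊R⌋ = ⌊R * (b:ℝ)^t⌋ / (b:ℤ)^t := by
    have h1 : R = (R * (b:ℝ)^t) / ((b^t : ℕ) : ℝ) := by
      have : ((b^t : ℕ) : ℝ) ≠ 0 := by positivity
      field_simp
      rw [Nat.cast_pow]
    conv_lhs => rw [h1]
    rw [floor_div_nat' _ _ hpos2]
    congr 1
  have hA : ⌊Int.fract R * (b:ℝ)^(i+1)⌋ = ⌊R * (b:ℝ)^(i+1)⌋ - ⌊R⌋ * (b:ℤ)^(i+1) := by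
    have h1 : Int.fract R * (b:ℝ)^(i+1)
        = R * (b:ℝ)^(i+1) - ((⌊R⌋ * (b:ℤ)^(i+1) : ℤ) : ℝ) := by
      rw [Int.fract]; push_cast; ring
    rw [h1, Int.floor_sub_intCast]
  unfold rdigit gdig
  rw [hA, hB, hC]

def badSet (B d j t : ℕ) : Set ℝ :=
  {R : ℝ | (1/(j+1) : ℝ) < |(((rdigits B R t).count (d % B) : ℝ))/t - 1/B| ∧
    ∀ m : ℤ, R * (B:ℝ)^t ≠ (m:ℝ)}

lemma isOpen_badSet (B d j t : ℕ) (hB : 0 < B) : IsOpen (badSet B d j t) := by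
  rw [isOpen_iff_mem_nhds]
  intro R hR
  obtain ⟨h1, h2⟩ := hR
  set M := ⌊R * (B:ℝ)^t⌋ with hM
  have hBpos : (0:ℝ) < (B:ℝ)^t := by positivity
  have hRlt : R * (B:ℝ)^t < M + 1 := Int.lt_floor_add_one _
  have hRgt : (M:ℝ) < R * (B:ℝ)^t := lt_of_le_of_ne (Int.floor_le _) (Ne.symm (h2 M))
  have hmem : Set.Ioo ((M:ℝ)/(B:ℝ)^t) (((M:ℝ)+1)/(B:ℝ)^t) ∈ nhds R := by
    apply Ioo_mem_nhds
    · rw [div_lt_iff₀ hBpos]; exact hRgt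
    · rw [lt_div_iff₀ hBpos]; exact hRlt
  filter_upwards [hmem] with R' hR'
  have l1 : (M:ℝ) < R' * (B:ℝ)^t := by
    have := hR'.1; rwa [div_lt_iff₀ hBpos] at this
  have l2 : R' * (B:ℝ)^t < (M:ℝ) + 1 := by
    have := hR'.2; rwa [lt_div_iff₀ hBpos] at this
  have hfl : ⌊R' * (B:ℝ)^t⌋ = M := by
    rw [Int.floor_eq_iff]
    exact ⟨le_of_lt l1, by exact_mod_cast l2⟩
  constructor
  · have hdig : rdigits B R' t = rdigits B R t := by
      unfold rdigits
      apply List.map_congr_left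
      intro i hi
      rw [List.mem_range] at hi
      rw [rdigit_eq_gdig B hB t i hi, rdigit_eq_gdig B hB t i hi, hfl, hM]
    rw [hdig]; exact h1
  · intro m hm
    rw [hm] at l1 l2
    have : M < m ∧ (m:ℝ) < M + 1 := ⟨by exact_mod_cast l1, l2⟩
    have : M < m ∧ m < M + 1 := ⟨this.1, by exact_mod_cast this.2⟩
    omega

lemma rdigit_badic (b : ℕ) (hb : 0 < b) (s : ℤ) (u i : ℕ) (hu : u ≤ i) :
    rdigit b ((s:ℝ)/(b:ℝ)^u) i = 0 := by
  have hbR : (0:ℝ) < (b:ℝ) := by exact_mod_cast hb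
  set x : ℝ := (s:ℝ)/(b:ℝ)^u with hx
  set z : ℤ := ⌊x⌋ with hz
  set k : ℤ := (s - z * (b:ℤ)^u) * (b:ℤ)^(i+1-u) with hk
  have hzs : (z:ℝ) * (b:ℝ)^u ≤ (s:ℝ) := by
    have h1 : (z:ℝ) ≤ x := Int.floor_le x
    calc (z:ℝ) * (b:ℝ)^u ≤ x * (b:ℝ)^u := by
          apply mul_le_mul_of_nonneg_right h1 (by positivity)
      _ = (s:ℝ) := by rw [hx]; field_simp
  have hk0 : 0 ≤ k := by
    apply mul_nonneg _ (by positivity)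
    have : (z:ℝ) * ((b:ℝ))^u ≤ (s:ℝ) := hzs
    have h2 : ((z * (b:ℤ)^u : ℤ):ℝ) ≤ ((s:ℤ):ℝ) := by push_cast; push_cast at this; linarith
    have h3 : z * (b:ℤ)^u ≤ s := by exact_mod_cast h2
    omega
  have hfr : Int.fract x * (b:ℝ)^(i+1) = (k:ℝ) := by
    have hsp : (b:ℝ)^(i+1) = (b:ℝ)^u * (b:ℝ)^(i+1-u) := by
      rw [← pow_add]; congr 1; omega
    rw [Int.fract, hsp, hx]
    have hbu : (b:ℝ)^u ≠ 0 := by positivity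
    rw [hk]; push_cast
    field_simp
    ring
  have hdvd : (b:ℤ) ∣ k := by
    rw [hk]
    apply Dvd.dvd.mul_left
    apply dvd_pow_self
    omega
  unfold rdigit
  rw [hfr, Int.floor_intCast]
  have h4 : (b:ℤ) ∣ (k.toNat : ℤ) := by rwa [Int.toNat_of_nonneg hk0]
  have h5 : b ∣ k.toNat := by exact_mod_cast h4
  exact Nat.eq_zero_of_dvd_of_lt ((Nat.dvd_mod_iff dvd_rfl).mpr h5) (Nat.mod_lt _ hb)

lemma count_zero_ge (b : ℕ) (R : ℝ) (t : ℕ) (h : ∀ i, t ≤ i → rdigit b R i = 0) :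
    ∀ n, n - t ≤ (rdigits b R n).count 0 := by
  intro n
  induction n with
  | zero => simp [rdigits]
  | succ n ih =>
    have hsplit : rdigits b R (n+1) = rdigits b R n ++ [rdigit b R n] := by
      unfold rdigits; rw [List.range_succ, List.map_append]; simp
    rw [hsplit, List.count_append]
    by_cases hn : t ≤ n
    · have : rdigit b R n = 0 := h n hn
      simp [this]
      omega
    · have : n + 1 - t ≤ 0 + 0 := by omega
      omega

lemma not_tendsto_badic (b : ℕ) (hb : 2 ≤ b) (R : ℝ) (t : ℕ)
    (h : ∀ i, t ≤ i → rdigit b R i = 0) :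
    ¬ Tendsto (fun n => ((rdigits b R n).count 0 : ℝ) / n) atTop (nhds (1 / (b:ℝ))) := by
  intro hT
  have hlen : ∀ n, (rdigits b R n).length = n := by
    intro n; unfold rdigits; simp
  have hlow : Tendsto (fun n : ℕ => ((n:ℝ) - t)/n) atTop (nhds 1) := by
    have h1 : Tendsto (fun n : ℕ => 1 - (t:ℝ)/n) atTop (nhds (1 - 0)) :=
      Tendsto.sub tendsto_const_nhds (tendsto_const_div_atTop_nhds_zero_nat (t:ℝ))
    rw [sub_zero] at h1
    apply h1.congr'
    filter_upwards [eventually_gt_atTop 0] with n hn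
    have : (n:ℝ) ≠ 0 := by positivity
    field_simp
  have hsq : Tendsto (fun n => ((rdigits b R n).count 0 : ℝ) / n) atTop (nhds 1) := by
    apply tendsto_of_tendsto_of_tendsto_of_le_of_le' hlow tendsto_const_nhds
    · filter_upwards [eventually_ge_atTop t, eventually_gt_atTop 0] with n hn hn0
      have h1 : n - t ≤ (rdigits b R n).count 0 := count_zero_ge b R t h n
      have h2 : ((n - t : ℕ):ℝ) ≤ ((rdigits b R n).count 0 : ℝ) := by exact_mod_cast h1
      rw [Nat.cast_sub hn] at h2
      have hn0' : (0:ℝ) < (n:ℝ) := by exact_mod_cast hn0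
      gcongr
    · filter_upwards [eventually_gt_atTop 0] with n hn
      have h1 : (rdigits b R n).count 0 ≤ n := by
        calc (rdigits b R n).count 0 ≤ (rdigits b R n).length := List.count_le_length
          _ = n := hlen n
      rw [div_le_one (by exact_mod_cast hn)]
      exact_mod_cast h1
  have := tendsto_nhds_unique hT hsq
  have hlt : (1:ℝ)/b < 1 := by
    rw [div_lt_one (by positivity)]
    exact_mod_cast hb
  rw [this] at hlt
  exact lt_irrefl _ hlt


noncomputable def ctr (b s : ℕ) : ℝ :=
  ((Denumerable.ofNat ℤ (Nat.unpair s).1 : ℤ) : ℝ) / (b:ℝ)^((Nat.unpair s).2)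

noncomputable def UU (n m k : ℕ) : Set ℝ :=
  if m % 2 = 0 then
    Set.Ioo (ctr (n+2) (m/2) - 1/(k+1)) (ctr (n+2) (m/2) + 1/(k+1))
  else
    ⋃ t : ℕ, badSet ((n+2)^((Nat.unpair (m/2)).1+1)) (Nat.unpair ((Nat.unpair (m/2)).2)).1
      (Nat.unpair ((Nat.unpair (m/2)).2)).2 (k + t)

lemma isOpen_UU (n m k : ℕ) : IsOpen (UU n m k) := by
  unfold UU
  split
  · exact isOpen_Ioo
  · exact isOpen_iUnion fun t => isOpen_badSet _ _ _ _ (by positivity)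


/-- The set of absolutely abnormal real numbers is `Π⁰₄` in the Borel hierarchy: it is a
countable intersection of countable unions of countable intersections of open sets. -/
theorem absolutelyAbnormal_pi04 :
    ∃ U : ℕ → ℕ → ℕ → Set ℝ, (∀ n m k, IsOpen (U n m k)) ∧
      {R : ℝ | AbsolutelyAbnormal R} = ⋂ n, ⋃ m, ⋂ k, U n m k := by
  refine ⟨UU, fun n m k => isOpen_UU n m k, ?_⟩
  ext R
  simp only [Set.mem_setOf_eq, Set.mem_iInter, Set.mem_iUnion]
  constructor
  · intro hR n
    set b := n + 2 with hb
    have hb2 : 2 ≤ b := by omega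
    by_cases hbad : ∃ s : ℤ, ∃ u : ℕ, R = (s:ℝ)/(b:ℝ)^u
    · obtain ⟨s, u, hsu⟩ := hbad
      refine ⟨2 * Nat.pair (Encodable.encode s) u, fun k => ?_⟩
      have hm2 : (2 * Nat.pair (Encodable.encode s) u) % 2 = 0 := by omega
      have hdiv : (2 * Nat.pair (Encodable.encode s) u) / 2 = Nat.pair (Encodable.encode s) u := by
        omega
      rw [UU, if_pos hm2, hdiv]
      have hc : ctr (n+2) (Nat.pair (Encodable.encode s) u) = R := by
        rw [ctr, Nat.unpair_pair]
        simp only [Denumerable.ofNat_encode]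
        rw [hsu]
      rw [hc]
      have hk : (0:ℝ) < 1/(k+1) := by positivity
      constructor <;> linarith
    · have h := hR b hb2
      rw [NormalBase] at h
      push_neg at h
      obtain ⟨ℓ, hℓ, hsn⟩ := h
      rw [SimplyNormal] at hsn
      push_neg at hsn
      obtain ⟨d, hd, hT⟩ := hsn
      rw [Metric.tendsto_atTop] at hT
      push_neg at hT
      obtain ⟨ε, hε, hfr⟩ := hT
      obtain ⟨j, hj⟩ := exists_nat_one_div_lt hε
      refine ⟨2 * (Nat.pair (ℓ-1) (Nat.pair d j)) + 1, fun k => ?_⟩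
      have hm2 : (2 * (Nat.pair (ℓ-1) (Nat.pair d j)) + 1) % 2 ≠ 0 := by omega
      have hdiv : (2 * (Nat.pair (ℓ-1) (Nat.pair d j)) + 1) / 2
          = Nat.pair (ℓ-1) (Nat.pair d j) := by omega
      rw [UU, if_neg hm2, hdiv, Nat.unpair_pair, Nat.unpair_pair]
      simp only
      have hℓ' : ℓ - 1 + 1 = ℓ := by omega
      rw [hℓ']
      obtain ⟨t, ht, hdist⟩ := hfr k
      apply Set.mem_iUnion.mpr
      refine ⟨t - k, ?_⟩
      have htk : k + (t - k) = t := by omega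
      rw [htk]
      constructor
      · rw [Nat.mod_eq_of_lt hd]
        rw [Real.dist_eq] at hdist
        linarith
      · intro mm hmm
        apply hbad
        refine ⟨mm, ℓ * t, ?_⟩
        have hcast : ((b^ℓ : ℕ) : ℝ)^t = (b:ℝ)^(ℓ*t) := by
          push_cast
          rw [← pow_mul]
        rw [hcast] at hmm
        have hbp : (0:ℝ) < (b:ℝ)^(ℓ*t) := by positivity
        field_simp
        linarith [hmm]
  · intro h b hb2
    have hn := h (b - 2)
    have hbn : b - 2 + 2 = b := by omega
    obtain ⟨m, hm⟩ := hn
    by_cases hm2 : m % 2 = 0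
    · -- even branch: R is a b-adic rational
      set s : ℤ := Denumerable.ofNat ℤ (Nat.unpair (m/2)).1 with hs
      set u : ℕ := (Nat.unpair (m/2)).2 with hu
      have hc : ctr b (m/2) = (s:ℝ)/(b:ℝ)^u := rfl
      have hR : R = (s:ℝ)/(b:ℝ)^u := by
        by_contra hne
        have habs : 0 < |R - ctr b (m/2)| := by
          rw [abs_pos, sub_ne_zero, hc]
          exact hne
        obtain ⟨k, hk⟩ := exists_nat_one_div_lt habs
        have hmk := hm k
        rw [UU, if_pos hm2, hbn] at hmk
        obtain ⟨l1, l2⟩ := hmk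
        have : |R - ctr b (m/2)| < 1/(k+1) := abs_lt.mpr ⟨by linarith, by linarith⟩
        linarith
      intro hN
      have h1 := hN 1 le_rfl
      rw [pow_one] at h1
      have h0 := h1 0 (by omega)
      apply not_tendsto_badic b hb2 R u _ h0
      intro i hi
      rw [hR]
      exact rdigit_badic b (by omega) s u i hi
    · -- odd branch
      set ℓ : ℕ := (Nat.unpair (m/2)).1 + 1 with hℓ
      set d : ℕ := (Nat.unpair ((Nat.unpair (m/2)).2)).1 with hd
      set j : ℕ := (Nat.unpair ((Nat.unpair (m/2)).2)).2 with hj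
      intro hN
      have hBpos : 0 < b ^ ℓ := by positivity
      have hs := hN ℓ (by omega)
      have hT := hs (d % b^ℓ) (Nat.mod_lt _ hBpos)
      rw [Metric.tendsto_atTop] at hT
      obtain ⟨N, hN2⟩ := hT (1/((j:ℝ)+1)) (by positivity)
      have hmN := hm N
      rw [UU, if_neg hm2, hbn] at hmN
      obtain ⟨t, hbs⟩ := Set.mem_iUnion.mp hmN
      have h1 := hbs.1
      have h2 := hN2 (N+t) (Nat.le_add_right N t)
      rw [Real.dist_eq] at h2
      linarith
end

section
/- For every computable predicate C : ℕ⁺ × ℕ⁺ → Bool there is a computable infinite sequence f : ℕ → ℕ⁺ of positive integers such that: (i) every positive integer occurs in f, and for each x ≥ 1 the first occurrence of x+1 in f comes strictly after the first occurrence of x (so the subsequence of f's first occurrences enumerates ℕ⁺ in increasing order); (ii) if for every x the set {y : C(x,y)} is finite, then no positive integer occurs infinitely often in f; and (iii) if there is some x for which {y : C(x,y)} is infinite, then all but finitely many positive integers occur infinitely often in f. -/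
namespace FirstRed

/-- the little block contributed by column `x` at stage `n` -/
def bb (C : ℕ → ℕ → Bool) (n x : ℕ) : List ℕ :=
  bif decide (1 ≤ x) && C x n then List.range' x (n + 1 - x) else []

/-- concatenation of `bb C n x` for `x < k` -/
def T (C : ℕ → ℕ → Bool) (n k : ℕ) : List ℕ :=
  Nat.rec [] (fun x ih => ih ++ bb C n x) k

/-- the block at stage `n` -/
def B (C : ℕ → ℕ → Bool) (n : ℕ) : List ℕ :=
  (n + 1) :: T C n (n + 1)

/-- concatenation of the first `m` blocks -/
def F (C : ℕ → ℕ → Bool) (m : ℕ) : List ℕ :=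
  Nat.rec [] (fun n ih => ih ++ B C n) m

def L (C : ℕ → ℕ → Bool) (m : ℕ) : ℕ := (F C m).length

def f (C : ℕ → ℕ → Bool) (i : ℕ) : ℕ := (F C (i + 1)).getD i 0

variable {C : ℕ → ℕ → Bool}

theorem F_succ (n : ℕ) : F C (n + 1) = F C n ++ B C n := rfl

theorem L_succ (n : ℕ) : L C (n + 1) = L C n + (B C n).length := by
  simp [L, F_succ]

theorem L_strictMono : StrictMono (L C) := by
  apply strictMono_nat_of_lt_succ
  intro n
  rw [L_succ]
  have : 0 < (B C n).length := by simp [B]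
  omega

theorem le_L (m : ℕ) : m ≤ L C m := by
  induction m with
  | zero => simp [L, F]
  | succ n ih =>
    have : 0 < (B C n).length := by simp [B]
    rw [L_succ]; omega

theorem F_prefix {m n : ℕ} (h : m ≤ n) : F C m <+: F C n := by
  induction h with
  | refl => exact List.prefix_refl _
  | step _ ih => exact ih.trans ⟨B C _, (F_succ _).symm⟩

theorem f_eq_getD {i m : ℕ} (h : i < L C m) : f C i = (F C m).getD i 0 := by
  have h1 : i < L C (i + 1) := lt_of_lt_of_le (Nat.lt_succ_self i) (le_L _)
  rcases le_total (i + 1) m with hm | hm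
  · obtain ⟨t, ht⟩ := F_prefix (C := C) hm
    rw [f, ← ht, List.getD_append _ _ _ _ h1]
  · obtain ⟨t, ht⟩ := F_prefix (C := C) hm
    rw [f, ← ht, List.getD_append _ _ _ _ h]

theorem f_block {n j : ℕ} (hj : j < (B C n).length) :
    f C (L C n + j) = (B C n).getD j 0 := by
  have h : L C n + j < L C (n + 1) := by rw [L_succ]; omega
  have hL : L C n = (F C n).length := rfl
  rw [f_eq_getD h, F_succ,
    List.getD_append_right _ _ _ _ (show (F C n).length ≤ L C n + j by omega)]
  congr 1
  omega

theorem exists_block (i : ℕ) : ∃ n, L C n ≤ i ∧ i < L C (n + 1) := by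
  have h0 : L C 0 ≤ i := by simp [L, F]
  have h1 : i < L C (i + 1) := lt_of_lt_of_le (Nat.lt_succ_self i) (le_L _)
  by_contra hcon
  push_neg at hcon
  have : ∀ n, L C n ≤ i → L C (n + 1) ≤ i := fun n hn => hcon n hn
  have hall : ∀ n, L C n ≤ i := by
    intro n; induction n with
    | zero => exact h0
    | succ k ih => exact this k ih
  exact absurd (hall (i + 1)) (by omega)

theorem mem_range'_iff {m s n : ℕ} : m ∈ List.range' s n ↔ s ≤ m ∧ m < s + n := by
  rw [List.mem_range']
  constructor
  · rintro ⟨i, hi, rfl⟩; omega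
  · rintro ⟨h1, h2⟩; exact ⟨m - s, by omega, by omega⟩

theorem mem_bb {y n x : ℕ} :
    y ∈ bb C n x ↔ 1 ≤ x ∧ C x n = true ∧ x ≤ y ∧ y ≤ n := by
  unfold bb
  rcases hx : decide (1 ≤ x) && C x n with _ | _
  · simp only [cond_false, List.not_mem_nil, false_iff]
    simp only [Bool.and_eq_false_iff, decide_eq_false_iff_not] at hx
    rintro ⟨h1, h2, -⟩
    rcases hx with hx | hx
    · exact hx h1
    · rw [h2] at hx; exact Bool.false_ne_true hx.symm  -- adjust
  · simp only [Bool.and_eq_true, decide_eq_true_eq] at hx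
    simp only [cond_true, mem_range'_iff]
    constructor
    · rintro ⟨h1, h2⟩
      exact ⟨hx.1, hx.2, h1, by omega⟩
    · rintro ⟨-, -, h1, h2⟩
      exact ⟨h1, by omega⟩

theorem mem_T {y n k : ℕ} : y ∈ T C n k ↔ ∃ x < k, y ∈ bb C n x := by
  induction k with
  | zero => simp [T]
  | succ m ih =>
    show y ∈ T C n m ++ bb C n m ↔ _
    simp only [List.mem_append, ih]
    constructor
    · rintro (⟨x, hx, hy⟩ | hy)
      · exact ⟨x, by omega, hy⟩
      · exact ⟨m, by omega, hy⟩
    · rintro ⟨x, hx, hy⟩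
      rcases Nat.lt_succ_iff_lt_or_eq.mp hx with h | rfl
      · exact Or.inl ⟨x, h, hy⟩
      · exact Or.inr hy

theorem mem_B {y n : ℕ} :
    y ∈ B C n ↔ y = n + 1 ∨ ∃ x, 1 ≤ x ∧ C x n = true ∧ x ≤ y ∧ y ≤ n := by
  simp only [B, List.mem_cons, mem_T, mem_bb]
  constructor
  · rintro (rfl | ⟨x, -, h⟩)
    · exact Or.inl rfl
    · exact Or.inr ⟨x, h⟩
  · rintro (rfl | ⟨x, h1, h2, h3, h4⟩)
    · exact Or.inl rfl
    · exact Or.inr ⟨x, by omega, h1, h2, h3, h4⟩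

theorem one_le_of_mem_B {y n : ℕ} (h : y ∈ B C n) : 1 ≤ y := by
  rcases mem_B.mp h with rfl | ⟨x, h1, -, h3, -⟩ <;> omega

theorem le_of_mem_B {y n : ℕ} (h : y ∈ B C n) : y ≤ n + 1 := by
  rcases mem_B.mp h with rfl | ⟨x, -, -, -, h4⟩ <;> omega

theorem f_mem_block {i n : ℕ} (h1 : L C n ≤ i) (h2 : i < L C (n + 1)) :
    f C i ∈ B C n := by
  have hj : i - L C n < (B C n).length := by rw [L_succ] at h2; omega
  have : f C i = (B C n).getD (i - L C n) 0 := by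
    have := f_block (C := C) (n := n) (j := i - L C n) hj
    rwa [Nat.add_sub_cancel' h1] at this
  rw [this, List.getD_eq_getElem _ _ hj]
  exact List.getElem_mem _

theorem f_head (n : ℕ) : f C (L C n) = n + 1 := by
  have h0 : 0 < (B C n).length := by simp [B]
  have := f_block (C := C) (n := n) (j := 0) h0
  simpa [B] using this

theorem one_le_f (i : ℕ) : 1 ≤ f C i := by
  obtain ⟨n, h1, h2⟩ := exists_block (C := C) i
  exact one_le_of_mem_B (f_mem_block h1 h2)

theorem sInf_eq {x : ℕ} (hx : 1 ≤ x) : sInf {i | f C i = x} = L C (x - 1) := by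
  have hmem : L C (x - 1) ∈ {i | f C i = x} := by
    show f C (L C (x - 1)) = x
    rw [f_head]; omega
  apply le_antisymm (Nat.sInf_le hmem)
  by_contra hlt
  push_neg at hlt
  have hne : {i | f C i = x}.Nonempty := ⟨_, hmem⟩
  have hin := Nat.sInf_mem hne
  set i := sInf {i | f C i = x} with hi
  obtain ⟨n, h1, h2⟩ := exists_block (C := C) i
  have hmem' : f C i ∈ B C n := f_mem_block h1 h2
  have hle : f C i ≤ n + 1 := le_of_mem_B hmem'
  have : L C n < L C (x - 1) := lt_of_le_of_lt h1 hlt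
  have hn : n < x - 1 := L_strictMono.lt_iff_lt.mp this
  have : f C i = x := hin
  omega

theorem computable_bb (hC : Computable₂ C) : Computable₂ (bb C) := by
  have hcond : Computable fun p : ℕ × ℕ => decide (1 ≤ p.2) && C p.2 p.1 := by
    have h1 : Computable fun p : ℕ × ℕ => decide (1 ≤ p.2) :=
      (Primrec.nat_le.comp (Primrec.const 1) Primrec.snd).decide.to_comp
    have h2 : Computable fun p : ℕ × ℕ => C p.2 p.1 := hC.comp .snd .fst
    exact (Computable.cond h1 h2 (Computable.const false)).of_eq fun p => by
      cases decide (1 ≤ p.2) <;> simp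
  have hr : Computable fun p : ℕ × ℕ => List.range' p.2 (p.1 + 1 - p.2) := by
    have : Primrec fun p : ℕ × ℕ =>
        (List.range (p.1 + 1 - p.2)).map (p.2 + ·) :=
      Primrec.list_map
        (Primrec.list_range.comp
          (Primrec.nat_sub.comp (Primrec.succ.comp Primrec.fst) Primrec.snd))
        ((Primrec.nat_add.comp (Primrec.snd.comp Primrec.fst) Primrec.snd).to₂)
    exact this.to_comp.of_eq fun p => List.range'_eq_map_range.symm
  exact (Computable.cond hcond hr (Computable.const [])).to₂

theorem computable_T (hC : Computable₂ C) : Computable₂ (T C) := by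
  have := Computable.nat_rec (f := fun p : ℕ × ℕ => p.2)
    (g := fun _ : ℕ × ℕ => ([] : List ℕ))
    (h := fun (p : ℕ × ℕ) (q : ℕ × List ℕ) => q.2 ++ bb C p.1 q.1)
    Computable.snd (Computable.const [])
    (Computable.list_append.comp (Computable.snd.comp .snd)
      ((computable_bb hC).comp (Computable.fst.comp .fst)
        (Computable.fst.comp .snd))).to₂
  exact this.to₂

theorem computable_B (hC : Computable₂ C) : Computable (B C) :=
  Computable.list_cons.comp Computable.succ
    ((computable_T hC).comp Computable.id Computable.succ)

theorem computable_F (hC : Computable₂ C) : Computable (F C) := by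
  have := Computable.nat_rec (f := fun n : ℕ => n)
    (g := fun _ : ℕ => ([] : List ℕ))
    (h := fun (_ : ℕ) (q : ℕ × List ℕ) => q.2 ++ B C q.1)
    Computable.id (Computable.const [])
    (Computable.list_append.comp (Computable.snd.comp .snd)
      ((computable_B hC).comp (Computable.fst.comp .snd))).to₂
  exact this

theorem computable_f (hC : Computable₂ C) : Computable (f C) :=
  (Primrec.list_getD 0).to_comp.comp
    ((computable_F hC).comp Computable.succ) Computable.id

theorem finite_occ (hfin : ∀ x, 1 ≤ x → {y | 1 ≤ y ∧ C x y = true}.Finite)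
    {x : ℕ} (hx : 1 ≤ x) : {i | f C i = x}.Finite := by
  have hS : (⋃ x' ∈ Set.Icc 1 x, {n | C x' n = true}).Finite := by
    apply Set.Finite.biUnion (Set.finite_Icc 1 x)
    intro x' hx'
    have : {n | C x' n = true} ⊆ insert 0 {y | 1 ≤ y ∧ C x' y = true} := by
      intro n hn
      rcases Nat.eq_zero_or_pos n with rfl | hp
      · exact Set.mem_insert _ _
      · exact Set.mem_insert_of_mem _ ⟨hp, hn⟩
    exact Set.Finite.subset ((hfin x' hx'.1).insert 0) this
  obtain ⟨N, hN⟩ := hS.bddAbove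
  set M := max N x + 1 with hM
  apply Set.Finite.subset (Set.finite_Iio (L C M))
  intro i hi
  simp only [Set.mem_setOf_eq] at hi
  by_contra hge
  simp only [Set.mem_Iio, not_lt] at hge
  obtain ⟨n, h1, h2⟩ := exists_block (C := C) i
  have hmem : f C i ∈ B C n := f_mem_block h1 h2
  have hMn : M ≤ n := by
    have : L C M < L C (n + 1) := lt_of_le_of_lt hge h2
    have := L_strictMono.lt_iff_lt.mp this
    omega
  rw [hi] at hmem
  rcases mem_B.mp hmem with h | ⟨x', hx'1, hx'2, hx'3, _⟩
  · omega
  · have : n ∈ ⋃ x' ∈ Set.Icc 1 x, {n | C x' n = true} := by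
      exact Set.mem_biUnion ⟨hx'1, hx'3.trans (le_refl x)⟩ hx'2
    have := hN this
    omega

theorem infinite_occ {x0 : ℕ} (hx0 : 1 ≤ x0)
    (hinf : {y | 1 ≤ y ∧ C x0 y = true}.Infinite)
    {x : ℕ} (hx : x0 ≤ x) : {i | f C i = x}.Infinite := by
  intro hfinO
  obtain ⟨b, hb⟩ := hfinO.bddAbove
  obtain ⟨n, hn, hgt⟩ := hinf.exists_gt (max x b)
  have hC' : C x0 n = true := hn.2
  have hxB : x ∈ B C n := mem_B.mpr (Or.inr ⟨x0, hx0, hC', hx, by omega⟩)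
  obtain ⟨j, hj, hget⟩ := List.mem_iff_getElem.mp hxB
  have hfval : f C (L C n + j) = x := by
    rw [f_block hj, List.getD_eq_getElem _ _ hj, hget]
  have h1 : L C n + j ≤ b := hb hfval
  have h2 := le_L (C := C) n
  omega

end FirstRed

/-- For every computable predicate `C` on pairs of positive integers there is a
computable sequence `f` of positive integers such that: every positive integer occurs
in `f` and the first occurrence of `x + 1` comes strictly after the first occurrence of
`x` (so the subsequence of first occurrences enumerates the positive integers in
increasing order); if `{y ≥ 1 : C x y}` is finite for every `x ≥ 1` then no positive
integer occurs infinitely often in `f`; and if `{y ≥ 1 : C x y}` is infinite for some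
`x ≥ 1` then all but finitely many positive integers occur infinitely often in `f`. -/
theorem first_reduction (C : ℕ → ℕ → Bool) (hC : Computable₂ C) :
    ∃ f : ℕ → ℕ, Computable f ∧ (∀ i, 1 ≤ f i) ∧
      (∀ x : ℕ, 1 ≤ x → ∃ i, f i = x) ∧
      (∀ x : ℕ, 1 ≤ x → sInf {i | f i = x} < sInf {i | f i = x + 1}) ∧
      ((∀ x : ℕ, 1 ≤ x → {y : ℕ | 1 ≤ y ∧ C x y = true}.Finite) →
        ∀ x : ℕ, 1 ≤ x → {i : ℕ | f i = x}.Finite) ∧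
      ((∃ x : ℕ, 1 ≤ x ∧ {y : ℕ | 1 ≤ y ∧ C x y = true}.Infinite) →
        ∃ N : ℕ, ∀ x : ℕ, N ≤ x → {i : ℕ | f i = x}.Infinite) := by
  refine ⟨FirstRed.f C, FirstRed.computable_f hC, FirstRed.one_le_f, ?_, ?_, ?_, ?_⟩
  · intro x hx
    refine ⟨FirstRed.L C (x - 1), ?_⟩
    rw [FirstRed.f_head]
    omega
  · intro x hx
    rw [FirstRed.sInf_eq hx, FirstRed.sInf_eq (by omega : 1 ≤ x + 1)]
    simp only [Nat.add_sub_cancel]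
    exact FirstRed.L_strictMono (by omega : x - 1 < x)
  · intro hfin x hx
    exact FirstRed.finite_occ hfin hx
  · rintro ⟨x0, hx0, hinf⟩
    exact ⟨x0, fun x hx => FirstRed.infinite_occ hx0 hinf hx⟩
end

section
/- For every non-empty dyadic interval I and every integer t ≥ 2, there exists a t-sequence (I_2, …, I_t) with I_2 = I. -/
open MeasureTheory
open scoped ENNReal

/-- `S` is a `b`-adic interval: a semi-open interval `[a/b^m, (a+1)/b^m)` with `m ∈ ℕ`
and `0 ≤ a < b^m`. -/
def IsBAdic (b : ℕ) (S : Set ℝ) : Prop :=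
  ∃ m a : ℕ, a < b ^ m ∧ S = Set.Ico ((a : ℝ) / (b : ℝ) ^ m) (((a : ℝ) + 1) / (b : ℝ) ^ m)

/-- `I` (restricted to indices `2, …, t`) is a `t`-sequence: `I 2` is dyadic, and for
every base `b` with `2 ≤ b < t`, `I (b+1)` is a `(b+1)`-adic subinterval of `I b` with
`μ(I (b+1)) ≥ μ(I b)/(2(b+1))`. -/
def IsTSeq (t : ℕ) (I : ℕ → Set ℝ) : Prop :=
  IsBAdic 2 (I 2) ∧ ∀ b : ℕ, 2 ≤ b → b < t →
    IsBAdic (b + 1) (I (b + 1)) ∧ I (b + 1) ⊆ I b ∧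
      volume (I b) / (2 * ((b : ℝ≥0∞) + 1)) ≤ volume (I (b + 1))

lemma step_lemma (b : ℕ) (hb : 2 ≤ b) (S : Set ℝ) (hS : IsBAdic b S) :
    ∃ S', IsBAdic (b + 1) S' ∧ S' ⊆ S ∧
      volume S / (2 * ((b : ℝ≥0∞) + 1)) ≤ volume S' := by
  obtain ⟨m, a, ha, rfl⟩ := hS
  have hb1 : 1 < b + 1 := by omega
  have hKpos : 0 < b ^ m := Nat.pow_pos (by omega)
  obtain ⟨N0, hN0⟩ := pow_unbounded_of_one_lt (2 * b ^ m) hb1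
  have hP : ∃ n, 2 * b ^ m ≤ (b + 1) ^ n := ⟨N0, hN0.le⟩
  set N := Nat.find hP with hNdef
  have hN : 2 * b ^ m ≤ (b + 1) ^ N := Nat.find_spec hP
  have hNne : N ≠ 0 := by
    intro h
    rw [h] at hN; simp at hN; omega
  have hNlt : (b + 1) ^ (N - 1) < 2 * b ^ m := by
    have := Nat.find_min hP (m := N - 1) (by omega)
    omega
  set c := (b + 1) ^ N with hc
  have hclt : c < 2 * (b + 1) * b ^ m := by
    calc c = (b + 1) * (b + 1) ^ (N - 1) := by
          rw [hc, ← pow_succ']; congr 1; omega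
    _ < (b + 1) * (2 * b ^ m) := mul_lt_mul_of_pos_left hNlt (by omega)
    _ = 2 * (b + 1) * b ^ m := by ring
  set K := b ^ m with hK
  set a' := (a * c + K - 1) / K with ha'
  have hdm := Nat.div_add_mod (a * c + K - 1) K
  have hmod := Nat.mod_lt (a * c + K - 1) hKpos
  have key1 : a * c ≤ a' * K := by
    set r := (a * c + K - 1) % K
    set P := K * a'
    have hP' : a' * K = P := Nat.mul_comm a' K
    omega
  have key2 : a' * K < a * c + K := by
    set r := (a * c + K - 1) % K
    set P := K * a'
    have hP' : a' * K = P := Nat.mul_comm a' K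
    omega
  have hKc : 2 * K ≤ c := hN
  have key3 : (a' + 1) * K ≤ (a + 1) * c := by
    have : (a' + 1) * K = a' * K + K := by ring
    nlinarith [key2]
  have key4 : a' < c := by
    have h1 : a * c + K ≤ K * c := by
      have ha1 : a + 1 ≤ K := ha
      calc a * c + K ≤ a * c + c := by omega
      _ = (a + 1) * c := by ring
      _ ≤ K * c := Nat.mul_le_mul_right c ha1
    have h2 : a' * K < c * K := by
      rw [mul_comm c K]; exact lt_of_lt_of_le key2 h1
    exact Nat.lt_of_mul_lt_mul_right h2
  clear hdm hmod ha' hNdef hN0 hNlt hNne hN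
  clear_value a' c K N
  subst hK
  refine ⟨Set.Ico ((a' : ℝ) / ((b + 1 : ℕ) : ℝ) ^ N) (((a' : ℝ) + 1) / ((b + 1 : ℕ) : ℝ) ^ N),
    ⟨N, a', by rwa [← hc], rfl⟩, ?_, ?_⟩
  · have hKR : (0 : ℝ) < (b : ℝ) ^ m := by positivity
    have hcR : (0 : ℝ) < ((b + 1 : ℕ) : ℝ) ^ N := by positivity
    have hcK : ((b + 1 : ℕ) : ℝ) ^ N = (c : ℝ) := by rw [hc]; push_cast; ring
    apply Set.Ico_subset_Ico
    · rw [div_le_div_iff₀ hKR hcR, hcK]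
      push_cast
      exact_mod_cast key1
    · rw [div_le_div_iff₀ hcR hKR, hcK]
      push_cast
      exact_mod_cast key3
  · have hKR : (0 : ℝ) < (b : ℝ) ^ m := by positivity
    have hcR : (0 : ℝ) < ((b + 1 : ℕ) : ℝ) ^ N := by positivity
    rw [Real.volume_Ico, Real.volume_Ico]
    have e1 : ((a : ℝ) + 1) / (b : ℝ) ^ m - (a : ℝ) / (b : ℝ) ^ m = 1 / (b : ℝ) ^ m := by
      field_simp; ring
    have e2 : ((a' : ℝ) + 1) / ((b + 1 : ℕ) : ℝ) ^ N - (a' : ℝ) / ((b + 1 : ℕ) : ℝ) ^ N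
        = 1 / ((b + 1 : ℕ) : ℝ) ^ N := by field_simp; ring
    rw [e1, e2]
    have hD : (2 * ((b : ℝ≥0∞) + 1)) = ENNReal.ofReal (2 * ((b : ℝ) + 1)) := by
      rw [ENNReal.ofReal_mul (by norm_num), ENNReal.ofReal_add (by positivity) (by norm_num)]
      simp
    rw [hD, ← ENNReal.ofReal_div_of_pos (by positivity)]
    apply ENNReal.ofReal_le_ofReal
    have hcK : ((b + 1 : ℕ) : ℝ) ^ N = (c : ℝ) := by rw [hc]; push_cast; ring
    rw [div_div, div_le_div_iff₀ (by positivity) (by positivity), one_mul, one_mul, hcK]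
    have : (c : ℝ) ≤ 2 * ((b : ℝ) + 1) * ((b : ℝ) ^ m) := by
      have h := hclt.le
      have : ((c : ℕ) : ℝ) ≤ ((2 * (b + 1) * b ^ m : ℕ) : ℝ) := Nat.cast_le.mpr h
      push_cast at this
      linarith
    linarith

open Classical in
noncomputable def stepSet (b : ℕ) (S : Set ℝ) : Set ℝ :=
  if h : 2 ≤ b ∧ IsBAdic b S then (step_lemma b h.1 S h.2).choose else S

lemma stepSet_spec (b : ℕ) (S : Set ℝ) (h1 : 2 ≤ b) (h2 : IsBAdic b S) :
    IsBAdic (b + 1) (stepSet b S) ∧ stepSet b S ⊆ S ∧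
      volume S / (2 * ((b : ℝ≥0∞) + 1)) ≤ volume (stepSet b S) := by
  unfold stepSet
  rw [dif_pos ⟨h1, h2⟩]
  exact (step_lemma b h1 S h2).choose_spec

noncomputable def seqSet (I : Set ℝ) : ℕ → Set ℝ
  | 0 => I
  | n + 1 => if n < 2 then I else stepSet n (seqSet I n)

lemma seqSet_two (I : Set ℝ) : seqSet I 2 = I := by simp [seqSet]

lemma seqSet_succ (I : Set ℝ) (b : ℕ) (hb : 2 ≤ b) :
    seqSet I (b + 1) = stepSet b (seqSet I b) := by
  rw [seqSet]; rw [if_neg (by omega)]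

lemma seqSet_badic (I : Set ℝ) (hI : IsBAdic 2 I) :
    ∀ b, 2 ≤ b → IsBAdic b (seqSet I b) := by
  intro b hb
  induction b with
  | zero => omega
  | succ n ih =>
    rcases Nat.lt_or_ge n 2 with h | h
    · interval_cases n
      · omega
      · rw [seqSet_two]; exact hI
    · rw [seqSet_succ I n h]
      exact (stepSet_spec n _ h (ih h)).1

/-- For every non-empty dyadic interval `I` and every `t ≥ 2`, there is a `t`-sequence
`(I_2, …, I_t)` with `I_2 = I`. -/
theorem exists_tSeq (I : Set ℝ) (hI : IsBAdic 2 I) (t : ℕ) (ht : 2 ≤ t) :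
    ∃ Iseq : ℕ → Set ℝ, IsTSeq t Iseq ∧ Iseq 2 = I := by
  refine ⟨seqSet I, ⟨by rw [seqSet_two]; exact hI, ?_⟩, seqSet_two I⟩
  intro b hb _
  have hB := seqSet_badic I hI b hb
  rw [seqSet_succ I b hb]
  exact stepSet_spec b _ hb hB
end
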